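/- arXiv:2405.19034 — 3 statements merged into one kernel-verified Lean document; each statement's English description precedes it below -/
import Mathlib

section
/- Let p ∈ [1,∞] and let p' be its conjugate exponent (1/p + 1/p' = 1). There exist constants 0 < c ≤ C, depending only on d and p, such that for every nonnegative measurable function f : ℝ^d → [0,∞): c·|||f|||_p ≤ sup { ∫_{ℝ^d} f(x) g(x) dx : g : ℝ^d → [0,∞) measurable with |||g|||*_{p'} ≤ 1 } ≤ C·|||f|||_p. -/
open MeasureTheory ENNReal

noncomputable section

/-- The half-open unit cube centered at the lattice point `z`. -/
def unitCube (d : ℕ) (z : Fin d → ℤ) : Set (EuclideanSpace ℝ (Fin d)) :=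
  {x | ∀ i, (z i : ℝ) - 1/2 ≤ x i ∧ x i < (z i : ℝ) + 1/2}

/-- The localized norm `|||f|||_p := sup_{z ∈ ℤ^d} ‖f·1_{D_z}‖_{L^p}`. -/
def locNorm (d : ℕ) (p : ℝ≥0∞) (f : EuclideanSpace ℝ (Fin d) → ℝ) : ℝ≥0∞ :=
  ⨆ z : Fin d → ℤ, eLpNorm ((unitCube d z).indicator f) p volume

/-- The localized norm `|||f|||*_p := Σ_{z ∈ ℤ^d} ‖f·1_{D_z}‖_{L^p}`. -/
def locNormStar (d : ℕ) (p : ℝ≥0∞) (f : EuclideanSpace ℝ (Fin d) → ℝ) : ℝ≥0∞ :=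
  ∑' z : Fin d → ℤ, eLpNorm ((unitCube d z).indicator f) p volume

lemma unitCube_eq (d : ℕ) (z : Fin d → ℤ) :
    unitCube d z = (MeasurableEquiv.toLp 2 (Fin d → ℝ)).symm ⁻¹'
      (Set.univ.pi fun i => Set.Ico ((z i : ℝ) - 1/2) ((z i : ℝ) + 1/2)) := by
  ext x
  simp [unitCube, Set.mem_pi, Set.mem_Ico]

lemma unitCube_measurable (d : ℕ) (z : Fin d → ℤ) : MeasurableSet (unitCube d z) := by
  rw [unitCube_eq]
  exact (MeasurableEquiv.measurable _) (MeasurableSet.univ_pi fun i => measurableSet_Ico)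

lemma unitCube_volume (d : ℕ) (z : Fin d → ℤ) : volume (unitCube d z) = 1 := by
  rw [unitCube_eq,
    (EuclideanSpace.volume_preserving_symm_measurableEquiv_toLp (Fin d)).measure_preimage
      ((MeasurableSet.univ_pi fun i => measurableSet_Ico).nullMeasurableSet)]
  rw [volume_pi_pi]
  norm_num

lemma unitCube_disjoint (d : ℕ) : Pairwise (Function.onFun Disjoint (unitCube d)) := by
  intro z z' hzz'
  rw [Function.onFun, Set.disjoint_left]
  intro x hx hx'
  apply hzz'
  funext i
  have h1 := hx i
  have h2 := hx' i
  have a1 : (z' i : ℝ) < z i + 1 := by linarith [h1.1, h1.2, h2.1, h2.2]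
  have a2 : (z i : ℝ) < z' i + 1 := by linarith [h1.1, h1.2, h2.1, h2.2]
  have b1 : z' i < z i + 1 := by exact_mod_cast a1
  have b2 : z i < z' i + 1 := by exact_mod_cast a2
  omega

lemma unitCube_cover (d : ℕ) : ⋃ z, unitCube d z = Set.univ := by
  ext x
  simp only [Set.mem_iUnion, Set.mem_univ, iff_true]
  refine ⟨fun i => ⌊x i + 1/2⌋, fun i => ⟨?_, ?_⟩⟩
  · have := Int.floor_le (x i + 1/2); linarith
  · have := Int.lt_floor_add_one (x i + 1/2); linarith

lemma holder_cube {α : Type*} [MeasurableSpace α] {μ : Measure α} (p p' : ℝ≥0∞) (hpp' : 1/p + 1/p' = 1) {s : Set α} (hs : MeasurableSet s)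
    {f g : α → ℝ} (hf : Measurable f) (hg : Measurable g) :
    ∫⁻ x in s, ENNReal.ofReal (f x * g x) ∂μ ≤
      eLpNorm (s.indicator f) p μ * eLpNorm (s.indicator g) p' μ := by
  rw [← lintegral_indicator hs]
  have ptw : ∀ x, s.indicator (fun x => ENNReal.ofReal (f x * g x)) x ≤
      (‖s.indicator f x * s.indicator g x‖₊ : ℝ≥0∞) := by
    intro x
    by_cases hx : x ∈ s
    · simp only [Set.indicator_of_mem hx]
      rw [← enorm_eq_nnnorm, ← ofReal_norm]
      exact ENNReal.ofReal_le_ofReal (le_abs_self _)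
    · simp [Set.indicator_of_notMem hx]
  calc ∫⁻ x, s.indicator (fun x => ENNReal.ofReal (f x * g x)) x ∂μ
      ≤ ∫⁻ x, (‖s.indicator f x * s.indicator g x‖₊ : ℝ≥0∞) ∂μ := lintegral_mono ptw
    _ = eLpNorm (fun x => s.indicator f x * s.indicator g x) 1 μ :=
        (eLpNorm_one_eq_lintegral_enorm (f := fun x => s.indicator f x * s.indicator g x)).symm
    _ ≤ eLpNorm (s.indicator f) p μ * eLpNorm (s.indicator g) p' μ := by
        have : ENNReal.HolderTriple p p' 1 := ⟨by simpa [one_div] using hpp'⟩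
        simpa using eLpNorm_le_eLpNorm_mul_eLpNorm'_of_norm (p := p) (q := p') (r := 1)
          (hf.indicator hs).aestronglyMeasurable (hg.indicator hs).aestronglyMeasurable
          (fun a b => a * b) 1 (Filter.Eventually.of_forall fun x => by simp [norm_mul])

lemma upper (d : ℕ) (p p' : ℝ≥0∞) (hpp' : 1/p + 1/p' = 1)
    {f g : EuclideanSpace ℝ (Fin d) → ℝ} (hf : Measurable f) (hg : Measurable g)
    (hgn : locNormStar d p' g ≤ 1) :
    ∫⁻ x, ENNReal.ofReal (f x * g x) ≤ locNorm d p f := by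
  have key : ∫⁻ x, ENNReal.ofReal (f x * g x) =
      ∑' z : Fin d → ℤ, ∫⁻ x in unitCube d z, ENNReal.ofReal (f x * g x) := by
    rw [← lintegral_iUnion (unitCube_measurable d) (unitCube_disjoint d), unitCube_cover,
      Measure.restrict_univ]
  rw [key]
  calc ∑' z : Fin d → ℤ, ∫⁻ x in unitCube d z, ENNReal.ofReal (f x * g x)
      ≤ ∑' z : Fin d → ℤ, locNorm d p f * eLpNorm ((unitCube d z).indicator g) p' volume := by
        refine ENNReal.tsum_le_tsum fun z => ?_
        refine le_trans (holder_cube p p' hpp' (unitCube_measurable d z) hf hg) ?_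
        exact mul_le_mul_left (le_iSup (fun z => eLpNorm ((unitCube d z).indicator f) p volume) z) _
    _ = locNorm d p f * locNormStar d p' g := ENNReal.tsum_mul_left
    _ ≤ locNorm d p f * 1 := mul_le_mul_right hgn _
    _ = locNorm d p f := mul_one _

lemma star_of_support (d : ℕ) (p' : ℝ≥0∞) (z : Fin d → ℤ)
    {g : EuclideanSpace ℝ (Fin d) → ℝ} (hsupp : ∀ x, x ∉ unitCube d z → g x = 0) :
    locNormStar d p' g = eLpNorm g p' volume := by
  rw [locNormStar, tsum_eq_single z]
  · congr 1
    exact Set.indicator_eq_self.2 fun x hx => by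
      by_contra hxz
      exact hx (hsupp x hxz)
  · intro z' hz'
    have h0 : (unitCube d z').indicator g = 0 := by
      funext x
      by_cases hx : x ∈ unitCube d z'
      · rw [Set.indicator_of_mem hx]
        refine hsupp x fun hxz => ?_
        exact (Set.disjoint_left.1 (unitCube_disjoint d hz')) hx hxz
      · simp [Set.indicator_of_notMem hx]
    rw [h0, eLpNorm_zero]

lemma lower_top (d : ℕ) (z : Fin d → ℤ) {f : EuclideanSpace ℝ (Fin d) → ℝ}
    (hf : Measurable f) (hf0 : 0 ≤ f) {a : ℝ≥0∞}
    (ha : a < eLpNorm ((unitCube d z).indicator f) ∞ volume) :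
    ∃ g : EuclideanSpace ℝ (Fin d) → ℝ, Measurable g ∧ 0 ≤ g ∧ locNormStar d 1 g ≤ 1 ∧
      a < ∫⁻ x, ENNReal.ofReal (f x * g x) := by
  rw [eLpNorm_exponent_top, eLpNormEssSup] at ha
  obtain ⟨a', haa', ha'⟩ := exists_between ha
  set F := (unitCube d z).indicator f with hF
  set A := {x | a' < (‖F x‖₊ : ℝ≥0∞)} with hA
  have hFm : Measurable F := hf.indicator (unitCube_measurable d z)
  have hAmeas : MeasurableSet A := measurableSet_lt measurable_const hFm.enorm
  have hA0 : volume A ≠ 0 := by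
    intro h0
    have hae : ∀ᵐ x, (‖F x‖₊ : ℝ≥0∞) ≤ a' := by
      rw [ae_iff]; simpa [hA, not_le] using h0
    exact absurd (essSup_le_of_ae_le a' hae) (not_le.2 ha')
  have hAsub : A ⊆ unitCube d z := by
    intro x hx
    by_contra hxz
    have : F x = 0 := Set.indicator_of_notMem hxz f
    simp only [hA, Set.mem_setOf_eq, this] at hx
    simp at hx
  have hAfin : volume A ≠ ⊤ := by
    refine ne_top_of_le_ne_top ?_ (measure_mono hAsub)
    rw [unitCube_volume]; exact one_ne_top
  set c := (volume A).toReal⁻¹ with hc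
  have hc0 : 0 ≤ c := inv_nonneg.2 ENNReal.toReal_nonneg
  have hcA : ENNReal.ofReal c = (volume A)⁻¹ := by
    rw [hc, ENNReal.ofReal_inv_of_pos (ENNReal.toReal_pos hA0 hAfin),
      ENNReal.ofReal_toReal hAfin]
  refine ⟨A.indicator fun _ => c, measurable_const.indicator hAmeas,
    Set.indicator_nonneg (fun _ _ => hc0), ?_, ?_⟩
  · rw [star_of_support d 1 z]
    · rw [eLpNorm_one_eq_lintegral_enorm]
      have : ∀ x, (‖A.indicator (fun _ => c) x‖₊ : ℝ≥0∞)
          = A.indicator (fun _ => ENNReal.ofReal c) x := by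
        intro x
        by_cases hx : x ∈ A
        · rw [Set.indicator_of_mem hx, Set.indicator_of_mem hx]; exact Real.enorm_eq_ofReal hc0
        · simp [Set.indicator_of_notMem hx]
      simp_rw [enorm_eq_nnnorm, this]
      rw [lintegral_indicator hAmeas, setLIntegral_const, hcA,
        ENNReal.inv_mul_cancel hA0 hAfin]
    · intro x hx
      exact Set.indicator_of_notMem (fun hxA => hx (hAsub hxA)) _
  · refine lt_of_lt_of_le haa' ?_
    calc (a' : ℝ≥0∞) = a' * ((volume A)⁻¹ * volume A) := by
          rw [ENNReal.inv_mul_cancel hA0 hAfin, mul_one]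
      _ = a' * (volume A)⁻¹ * volume A := by ring
      _ = ∫⁻ _ in A, a' * (volume A)⁻¹ := (setLIntegral_const _ _).symm
      _ ≤ ∫⁻ x in A, ENNReal.ofReal (f x * A.indicator (fun _ => c) x) := by
          refine setLIntegral_mono' hAmeas fun x hx => ?_
          rw [Set.indicator_of_mem hx, ENNReal.ofReal_mul (hf0 x), hcA]
          refine mul_le_mul_left ?_ _
          have hx' : a' < (‖F x‖₊ : ℝ≥0∞) := hx
          rw [hF, Set.indicator_of_mem (hAsub hx), ← enorm_eq_nnnorm, Real.enorm_eq_ofReal (hf0 x)] at hx'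
          exact hx'.le
      _ ≤ ∫⁻ x, ENNReal.ofReal (f x * A.indicator (fun _ => c) x) :=
          setLIntegral_le_lintegral _ _

lemma lower_fin (d : ℕ) (z : Fin d → ℤ) (p p' : ℝ≥0∞) (hp : 1 ≤ p) (hptop : p ≠ ∞)
    (hpp' : 1/p + 1/p' = 1) {f : EuclideanSpace ℝ (Fin d) → ℝ}
    (hf : Measurable f) (hf0 : 0 ≤ f) {a : ℝ≥0∞}
    (ha : a < eLpNorm ((unitCube d z).indicator f) p volume) :
    ∃ g : EuclideanSpace ℝ (Fin d) → ℝ, Measurable g ∧ 0 ≤ g ∧ locNormStar d p' g ≤ 1 ∧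
      a < ∫⁻ x, ENNReal.ofReal (f x * g x) := by
  have hp0 : p ≠ 0 := (lt_of_lt_of_le one_pos hp).ne'
  set r := p.toReal with hrdef
  have hr : 0 < r := ENNReal.toReal_pos hp0 hptop
  have hr1 : 1 ≤ r := by rw [hrdef, ← ENNReal.toReal_one]; exact ENNReal.toReal_mono hptop hp
  set s := unitCube d z with hsdef
  have hsm : MeasurableSet s := unitCube_measurable d z
  rw [eLpNorm_eq_lintegral_rpow_enorm_toReal hp0 hptop, ← hrdef] at ha
  simp_rw [enorm_eq_nnnorm] at ha
  have hIeq : ∫⁻ x, (‖(s.indicator f) x‖₊ : ℝ≥0∞) ^ r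
      = ∫⁻ x in s, (ENNReal.ofReal (f x)) ^ r := by
    rw [← lintegral_indicator hsm]
    congr 1; funext x
    by_cases hx : x ∈ s
    · rw [Set.indicator_of_mem hx, Set.indicator_of_mem hx, ← enorm_eq_nnnorm, Real.enorm_eq_ofReal (hf0 x)]
    · rw [Set.indicator_of_notMem hx, Set.indicator_of_notMem hx]
      simp [ENNReal.zero_rpow_of_pos hr]
  rw [hIeq] at ha
  -- truncations
  set Fn : ℕ → EuclideanSpace ℝ (Fin d) → ℝ := fun n x => min (f x) n with hFn
  have hFnm : ∀ n, Measurable (Fn n) := fun n => hf.min measurable_const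
  have hFn0 : ∀ n x, 0 ≤ Fn n x := fun n x => le_min (hf0 x) (Nat.cast_nonneg n)
  have hFnle : ∀ n x, Fn n x ≤ f x := fun n x => min_le_left _ _
  set I : ℕ → ℝ≥0∞ := fun n => ∫⁻ x in s, (ENNReal.ofReal (Fn n x)) ^ r with hI
  have hmct : (∫⁻ x in s, (ENNReal.ofReal (f x)) ^ r) = ⨆ n, I n := by
    rw [hI, ← lintegral_iSup]
    · congr 1; funext x
      refine le_antisymm (le_iSup_of_le ⌈f x⌉₊ ?_) (iSup_le fun n => ?_)
      · have hmin : Fn ⌈f x⌉₊ x = f x := by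
          rw [hFn]
          exact min_eq_left (by exact_mod_cast Nat.le_ceil (f x))
        rw [hmin]
      · exact ENNReal.rpow_le_rpow (ENNReal.ofReal_le_ofReal (hFnle n x)) hr.le
    · exact fun n => ENNReal.continuous_rpow_const.measurable.comp ((hFnm n).ennreal_ofReal)
    · intro m k hmk x
      refine ENNReal.rpow_le_rpow (ENNReal.ofReal_le_ofReal ?_) hr.le
      exact min_le_min le_rfl (Nat.cast_le.2 hmk)
  rw [hmct] at ha
  have har : a ^ r < ⨆ n, I n := by
    have h2 := ENNReal.rpow_lt_rpow ha hr
    rwa [← ENNReal.rpow_mul, one_div, inv_mul_cancel₀ hr.ne', ENNReal.rpow_one] at h2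
  rw [lt_iSup_iff] at har
  obtain ⟨n, han⟩ := har
  have hIn0 : I n ≠ 0 := fun h => by simp [h] at han
  have hInround : I n ≤ ENNReal.ofReal n ^ r := by
    calc I n ≤ ∫⁻ _x in s, ENNReal.ofReal n ^ r := by
          refine setLIntegral_mono' hsm fun x _ => ?_
          exact ENNReal.rpow_le_rpow (ENNReal.ofReal_le_ofReal (min_le_right _ _)) hr.le
      _ = ENNReal.ofReal n ^ r * volume s := setLIntegral_const _ _
      _ = ENNReal.ofReal n ^ r := by rw [hsdef, unitCube_volume, mul_one]
  have hIntop : I n ≠ ⊤ :=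
    ne_top_of_le_ne_top (ENNReal.rpow_ne_top_of_nonneg hr.le ENNReal.ofReal_ne_top) hInround
  set N := I n ^ (1/r) with hN
  have hN0 : N ≠ 0 := (ENNReal.rpow_pos (pos_iff_ne_zero.2 hIn0) hIntop).ne'
  have hNtop : N ≠ ⊤ := ENNReal.rpow_ne_top_of_nonneg (by positivity) hIntop
  set t := N.toReal with ht
  have ht0 : 0 < t := ENNReal.toReal_pos hN0 hNtop
  have hofN : ENNReal.ofReal t = N := ENNReal.ofReal_toReal hNtop
  -- the dual function
  set g : EuclideanSpace ℝ (Fin d) → ℝ :=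
    fun x => s.indicator (fun y => (Fn n y) ^ (r-1)) x * t ^ (1-r) with hg
  have hgm : Measurable g := by
    refine Measurable.mul_const ?_ _
    exact ((Real.continuous_rpow_const (by linarith)).measurable.comp (hFnm n)).indicator hsm
  have hg0 : 0 ≤ g := by
    intro x
    exact mul_nonneg (Set.indicator_nonneg (fun y _ => Real.rpow_nonneg (hFn0 n y) _) x)
      (Real.rpow_nonneg ht0.le _)
  have hgsupp : ∀ x, x ∉ s → g x = 0 := fun x hx => by
    rw [hg]; simp [Set.indicator_of_notMem hx]
  have hgval : ∀ x ∈ s, ENNReal.ofReal (g x)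
      = ENNReal.ofReal (Fn n x) ^ (r-1) * N ^ (1-r) := by
    intro x hx
    rw [hg]; simp only [Set.indicator_of_mem hx]
    rw [ENNReal.ofReal_mul (Real.rpow_nonneg (hFn0 n x) _),
      ← ENNReal.ofReal_rpow_of_nonneg (hFn0 n x) (by linarith),
      ← ENNReal.ofReal_rpow_of_pos ht0, hofN]
  have hmeas1 : Measurable (fun x => ENNReal.ofReal (Fn n x) ^ r) := by
    exact ENNReal.continuous_rpow_const.measurable.comp ((hFnm n).ennreal_ofReal)
  -- the norm bound
  have hnormg : eLpNorm g p' volume ≤ 1 := by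
    by_cases hp1 : p = 1
    · have hp'top : p' = ∞ := by
        rw [hp1] at hpp'
        norm_num at hpp'
        exact hpp'
      have hrone : r = 1 := by rw [hrdef, hp1, ENNReal.toReal_one]
      rw [hp'top, eLpNorm_exponent_top, eLpNormEssSup]
      refine essSup_le_of_ae_le 1 (Filter.Eventually.of_forall fun x => ?_)
      have hgx : g x = 1 ∨ g x = 0 := by
        by_cases hx : x ∈ s
        · left; rw [hg]; simp only [Set.indicator_of_mem hx, hrone]
          norm_num
        · right; exact hgsupp x hx
      rcases hgx with h | h <;> simp [h]
    · -- 1 < p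
      have hplt : 1 < p := lt_of_le_of_ne hp (Ne.symm hp1)
      have hrlt : 1 < r := by
        have := ENNReal.toReal_strict_mono hptop hplt
        rwa [ENNReal.toReal_one] at this
      have hp'0 : p' ≠ 0 := by
        intro h
        rw [h] at hpp'
        simp at hpp'
      have hp'top : p' ≠ ∞ := by
        intro h
        rw [h] at hpp'
        simp at hpp'
        exact hp1 hpp'
      set r' := p'.toReal with hr'def
      have hr'0 : 0 < r' := ENNReal.toReal_pos hp'0 hp'top
      have hrr' : r⁻¹ + r'⁻¹ = 1 := by
        have h2 := congrArg ENNReal.toReal hpp'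
        rwa [one_div, one_div, ENNReal.toReal_add (ENNReal.inv_ne_top.2 hp0)
          (ENNReal.inv_ne_top.2 hp'0), ENNReal.toReal_inv, ENNReal.toReal_inv,
          ENNReal.toReal_one] at h2
      have hsum : r' + r = r * r' := by
        field_simp at hrr'
        linarith
      have hkey : (r - 1) * r' = r := by nlinarith
      have hkey' : (1 - r) * r' = -r := by nlinarith
      rw [eLpNorm_eq_lintegral_rpow_enorm_toReal hp'0 hp'top, ← hr'def]
      have hint : ∫⁻ x, (‖g x‖₊ : ℝ≥0∞) ^ r' = I n * N ^ (-r) := by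
        have heq : ∀ x, (‖g x‖₊ : ℝ≥0∞) ^ r'
            = s.indicator (fun y => ENNReal.ofReal (Fn n y) ^ r) x * N ^ (-r) := by
          intro x
          by_cases hx : x ∈ s
          · rw [Set.indicator_of_mem hx, ← enorm_eq_nnnorm, Real.enorm_eq_ofReal (hg0 x), hgval x hx,
              ENNReal.mul_rpow_of_nonneg _ _ hr'0.le, ← ENNReal.rpow_mul,
              ← ENNReal.rpow_mul, hkey, hkey']
          · rw [Set.indicator_of_notMem hx, hgsupp x hx]
            simp [ENNReal.zero_rpow_of_pos hr'0]
        simp_rw [heq]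
        rw [lintegral_mul_const _ (hmeas1.indicator hsm), lintegral_indicator hsm]
      simp_rw [enorm_eq_nnnorm]
      rw [hint]
      have hNr : N ^ (-r) = (I n)⁻¹ := by
        rw [hN, ← ENNReal.rpow_mul, ← ENNReal.rpow_neg_one]
        congr 1
        field_simp
      rw [hNr, ENNReal.mul_inv_cancel hIn0 hIntop, ENNReal.one_rpow]
  -- the integral bound
  have hNlt : a < N := by
    have h2 := ENNReal.rpow_lt_rpow han (by positivity : (0:ℝ) < 1/r)
    rwa [← ENNReal.rpow_mul, mul_one_div, div_self hr.ne', ENNReal.rpow_one] at h2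
  have hintlow : N ≤ ∫⁻ x, ENNReal.ofReal (f x * g x) := by
    have e1 : I n * N ^ (1-r) = N := by
      rw [hN, ← ENNReal.rpow_mul]
      nth_rewrite 1 [← ENNReal.rpow_one (I n)]
      rw [← ENNReal.rpow_add _ _ hIn0 hIntop]
      congr 1
      field_simp
      ring
    calc N = I n * N ^ (1-r) := e1.symm
      _ = ∫⁻ x in s, ENNReal.ofReal (Fn n x) ^ r * N ^ (1-r) := by
          rw [lintegral_mul_const _ hmeas1]
      _ ≤ ∫⁻ x in s, ENNReal.ofReal (f x * g x) := by
          refine setLIntegral_mono' hsm fun x hx => ?_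
          have h3 : ENNReal.ofReal (Fn n x * g x) ≤ ENNReal.ofReal (f x * g x) :=
            ENNReal.ofReal_le_ofReal (mul_le_mul_of_nonneg_right (hFnle n x) (hg0 x))
          refine le_trans ?_ h3
          rw [ENNReal.ofReal_mul (hFn0 n x), hgval x hx, ← mul_assoc]
          refine mul_le_mul_left (le_of_eq ?_) _
          by_cases h0 : ENNReal.ofReal (Fn n x) = 0
          · rw [h0, ENNReal.zero_rpow_of_pos hr, zero_mul]
          · nth_rewrite 2 [← ENNReal.rpow_one (ENNReal.ofReal (Fn n x))]
            rw [← ENNReal.rpow_add _ _ h0 ENNReal.ofReal_ne_top]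
            congr 1
            ring
      _ ≤ ∫⁻ x, ENNReal.ofReal (f x * g x) := setLIntegral_le_lintegral _ _
  exact ⟨g, hgm, hg0, by rw [star_of_support d p' z hgsupp]; exact hnormg,
    lt_of_lt_of_le hNlt hintlow⟩

/-- Duality: up to constants depending only on `d` and `p`,
`|||f|||_p ≍ sup { ∫ f·g : g ≥ 0 measurable, |||g|||*_{p'} ≤ 1 }`. -/
theorem locNorm_duality
    (d : ℕ) (hd : 1 ≤ d) (p p' : ℝ≥0∞) (hp : 1 ≤ p) (hpp' : 1/p + 1/p' = 1) :
    ∃ c C : ℝ, 0 < c ∧ c ≤ C ∧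
      ∀ f : EuclideanSpace ℝ (Fin d) → ℝ, Measurable f → 0 ≤ f →
        ENNReal.ofReal c * locNorm d p f ≤
            (⨆ g : {g : EuclideanSpace ℝ (Fin d) → ℝ //
                Measurable g ∧ 0 ≤ g ∧ locNormStar d p' g ≤ 1},
              ∫⁻ x, ENNReal.ofReal (f x * g.1 x)) ∧
        (⨆ g : {g : EuclideanSpace ℝ (Fin d) → ℝ //
            Measurable g ∧ 0 ≤ g ∧ locNormStar d p' g ≤ 1},
          ∫⁻ x, ENNReal.ofReal (f x * g.1 x)) ≤
          ENNReal.ofReal C * locNorm d p f := by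
  refine ⟨1, 1, one_pos, le_rfl, fun f hf hf0 => ?_⟩
  rw [ENNReal.ofReal_one, one_mul]
  constructor
  · refine iSup_le fun z => ?_
    refine le_of_forall_lt fun a ha => ?_
    by_cases hptop : p = ∞
    · have hp'1 : p' = 1 := by
        rw [hptop] at hpp'
        simp only [one_div, ENNReal.inv_top, zero_add] at hpp'
        exact ENNReal.inv_eq_one.1 hpp'
      rw [hptop] at ha
      obtain ⟨g, hgm, hg0, hgn, hgi⟩ := lower_top d z hf hf0 ha
      refine lt_of_lt_of_le hgi ?_
      exact le_iSup (fun g : {g : EuclideanSpace ℝ (Fin d) → ℝ //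
          Measurable g ∧ 0 ≤ g ∧ locNormStar d p' g ≤ 1} =>
        ∫⁻ x, ENNReal.ofReal (f x * g.1 x)) ⟨g, hgm, hg0, by rw [hp'1]; exact hgn⟩
    · obtain ⟨g, hgm, hg0, hgn, hgi⟩ := lower_fin d z p p' hp hptop hpp' hf hf0 ha
      refine lt_of_lt_of_le hgi ?_
      exact le_iSup (fun g : {g : EuclideanSpace ℝ (Fin d) → ℝ //
          Measurable g ∧ 0 ≤ g ∧ locNormStar d p' g ≤ 1} =>
        ∫⁻ x, ENNReal.ofReal (f x * g.1 x)) ⟨g, hgm, hg0, hgn⟩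
  · exact iSup_le fun g => upper d p p' hpp' hf g.2.1 g.2.2.2

end
end

section
/- (Estimate for Beta functions.) For every α ∈ (0,1], every β > 0 and every integer k ≥ 1, the Beta function satisfies B(α, kβ + 1) = ∫_0^1 r^{α−1} (1−r)^{kβ} dr ≤ (1/α + 1/β) · k^{−α}. -/
open Real

/-- Estimate for Beta functions: for `α ∈ (0,1]`, `β > 0` and `k ≥ 1`,
`B(α, kβ+1) = ∫_0^1 r^{α−1}(1−r)^{kβ} dr ≤ (1/α + 1/β)·k^{−α}`. -/
theorem beta_function_estimate
    (α β : ℝ) (hα0 : 0 < α) (hα1 : α ≤ 1) (hβ : 0 < β) (k : ℕ) (hk : 1 ≤ k) :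
    ∫ r in (0:ℝ)..1, r ^ (α - 1) * (1 - r) ^ ((k : ℝ) * β) ≤
      (1 / α + 1 / β) * (k : ℝ) ^ (-α) := by
  have hk1 : (1:ℝ) ≤ (k:ℝ) := by exact_mod_cast hk
  have hk0 : (0:ℝ) < (k:ℝ) := by linarith
  set c : ℝ := ((k:ℝ))⁻¹ with hcdef
  have hc0 : 0 < c := by positivity
  have hc1 : c ≤ 1 := by
    rw [hcdef]; exact inv_le_one_of_one_le₀ hk1
  set q : ℝ := (k:ℝ) * β with hqdef
  have hq0 : 0 < q := by positivity
  have hg : Continuous fun r : ℝ => (1 - r) ^ q := by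
    have h : Continuous fun x : ℝ => x ^ q := by
      refine continuous_iff_continuousAt.2 fun x => ?_
      exact Real.continuousAt_rpow_const x q (Or.inr hq0.le)
    exact h.comp (continuous_const.sub continuous_id)
  have hint : IntervalIntegrable (fun r => r ^ (α - 1) * (1 - r) ^ q) MeasureTheory.volume 0 1 := by
    refine (intervalIntegral.intervalIntegrable_rpow' (by linarith)).mul_continuousOn
      hg.continuousOn
  have hi1 : IntervalIntegrable (fun r => r ^ (α - 1) * (1 - r) ^ q) MeasureTheory.volume 0 c :=
    hint.mono_set (Set.uIcc_subset_uIcc (by simp)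
      (by rw [Set.uIcc_of_le (by norm_num)]; exact ⟨hc0.le, hc1⟩))
  have hi2 : IntervalIntegrable (fun r => r ^ (α - 1) * (1 - r) ^ q) MeasureTheory.volume c 1 :=
    hint.mono_set (Set.uIcc_subset_uIcc
      (by rw [Set.uIcc_of_le (by norm_num)]; exact ⟨hc0.le, hc1⟩) (by simp))
  have hsplit : ∫ r in (0:ℝ)..1, r ^ (α - 1) * (1 - r) ^ q =
      (∫ r in (0:ℝ)..c, r ^ (α - 1) * (1 - r) ^ q) +
      ∫ r in c..(1:ℝ), r ^ (α - 1) * (1 - r) ^ q :=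
    (intervalIntegral.integral_add_adjacent_intervals hi1 hi2).symm
  -- part 1
  have hb1 : (∫ r in (0:ℝ)..c, r ^ (α - 1) * (1 - r) ^ q) ≤ c ^ α / α := by
    have h1 : (∫ r in (0:ℝ)..c, r ^ (α - 1) * (1 - r) ^ q) ≤
        ∫ r in (0:ℝ)..c, r ^ (α - 1) := by
      refine intervalIntegral.integral_mono_on hc0.le hi1
        (intervalIntegral.intervalIntegrable_rpow' (by linarith)) ?_
      intro r hr
      have h1r : (1 - r) ^ q ≤ 1 :=
        Real.rpow_le_one (by linarith [hr.2, hc1]) (by linarith [hr.1]) hq0.le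
      have hrn : 0 ≤ r ^ (α - 1) := Real.rpow_nonneg hr.1 _
      nlinarith
    have h2 : (∫ r in (0:ℝ)..c, r ^ (α - 1)) = c ^ α / α := by
      rw [integral_rpow (Or.inl (by linarith))]
      have hα : α - 1 + 1 = α := by ring
      rw [hα, Real.zero_rpow hα0.ne']
      ring
    linarith
  -- part 2
  have hb2 : (∫ r in c..(1:ℝ), r ^ (α - 1) * (1 - r) ^ q) ≤ c ^ α / β := by
    have h1 : (∫ r in c..(1:ℝ), r ^ (α - 1) * (1 - r) ^ q) ≤
        ∫ r in c..(1:ℝ), c ^ (α - 1) * (1 - r) ^ q := by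
      refine intervalIntegral.integral_mono_on hc1 hi2
        ((continuous_const.mul hg).intervalIntegrable _ _) ?_
      intro r hr
      have h1 : r ^ (α - 1) ≤ c ^ (α - 1) :=
        Real.rpow_le_rpow_of_nonpos hc0 hr.1 (by linarith)
      exact mul_le_mul_of_nonneg_right h1 (Real.rpow_nonneg (by linarith [hr.2]) _)
    have h2 : (∫ r in c..(1:ℝ), c ^ (α - 1) * (1 - r) ^ q) =
        c ^ (α - 1) * ((1 - c) ^ (q + 1) / (q + 1)) := by
      rw [intervalIntegral.integral_const_mul]
      congr 1
      have := intervalIntegral.integral_comp_sub_left (a := c) (b := 1)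
        (fun x => x ^ q) 1
      simp only [sub_self] at this
      rw [this, integral_rpow (Or.inl (by linarith)),
        Real.zero_rpow (by linarith : q + 1 ≠ 0)]
      ring
    have h3 : c ^ (α - 1) * ((1 - c) ^ (q + 1) / (q + 1)) ≤ c ^ (α - 1) * (c / β) := by
      have hcn : 0 ≤ c ^ (α - 1) := Real.rpow_nonneg hc0.le _
      have h4 : (1 - c) ^ (q + 1) ≤ 1 :=
        Real.rpow_le_one (by linarith) (by linarith) (by linarith)
      have h5 : (1 - c) ^ (q + 1) / (q + 1) ≤ 1 / q := by
        have hp : 0 ≤ (1 - c) ^ (q + 1) := Real.rpow_nonneg (by linarith) _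
        have : (1 - c) ^ (q + 1) / (q + 1) ≤ 1 / (q + 1) := by
          apply div_le_div_of_nonneg_right h4 (by linarith) |>.trans_eq rfl
        refine this.trans ?_
        apply one_div_le_one_div_of_le hq0 (by linarith)
      have h6 : 1 / q = c / β := by
        rw [hqdef, hcdef]
        field_simp
      calc c ^ (α - 1) * ((1 - c) ^ (q + 1) / (q + 1))
          ≤ c ^ (α - 1) * (1 / q) := mul_le_mul_of_nonneg_left h5 hcn
        _ = c ^ (α - 1) * (c / β) := by rw [h6]
    have h7 : c ^ (α - 1) * (c / β) = c ^ α / β := by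
      have : c ^ (α - 1) * c = c ^ α := by
        rw [← Real.rpow_add_one hc0.ne' (α - 1)]
        norm_num
      rw [mul_div_assoc'] at *
      rw [this]
    linarith
  have hca : c ^ α = (k:ℝ) ^ (-α) := by
    rw [hcdef, Real.inv_rpow hk0.le, Real.rpow_neg hk0.le]
  rw [hsplit, ← hca]
  have : (1 / α + 1 / β) * c ^ α = c ^ α / α + c ^ α / β := by ring
  rw [this]
  linarith
end

section
/- (Two-parameter Gronwall inequality.) Let T > 0, let f, g : {(s,t) : 0 ≤ s ≤ t ≤ T} → [0,∞) be bounded measurable functions and h : [0,T] → [0,∞) integrable. Assume that for all 0 ≤ s ≤ t ≤ T: f(s,t) ≤ g(s,t) + ∫_s^t h(r)·(f(s,r) + f(r,T)) dr. Define G(s,t) := g(s,t) + ∫_s^t g(s,r) h(r) exp(∫_r^t h(r') dr') dr and H(r,t) := h(r)·(1 + ∫_r^t h(r') exp(∫_{r'}^t h(r'') dr'') dr'). Then for all 0 ≤ s ≤ t ≤ T: f(s,t) ≤ G(s,t) + ∫_s^t H(r,t)·( G(r,T) + ∫_r^T G(r',T) H(r',T) exp(∫_r^{r'} H(r'',T)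 dr'') dr' ) dr. -/
open MeasureTheory Real

noncomputable section

/-- `G(s,t) := g(s,t) + ∫_s^t g(s,r) h(r) exp(∫_r^t h) dr`. -/
def gronG (g : ℝ → ℝ → ℝ) (h : ℝ → ℝ) (s t : ℝ) : ℝ :=
  g s t + ∫ r in s..t, g s r * h r * Real.exp (∫ r' in r..t, h r')

/-- `H(r,t) := h(r)·(1 + ∫_r^t h(r') exp(∫_{r'}^t h) dr')`. -/
def gronH (h : ℝ → ℝ) (r t : ℝ) : ℝ :=
  h r * (1 + ∫ r' in r..t, h r' * Real.exp (∫ r'' in r'..t, h r''))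

open Set
open scoped Interval

section auxiliary

set_option linter.unnecessarySeqFocus false

variable {p : ℝ → ℝ}

lemma prim_diff (hpi : Integrable p) (c a b : ℝ) :
    (∫ y in c..b, p y) - ∫ y in c..a, p y = ∫ y in a..b, p y := by
  have := intervalIntegral.integral_add_adjacent_intervals (a := c) (b := a) (c := b)
    hpi.intervalIntegrable hpi.intervalIntegrable
  linarith

lemma prim_mono (hpi : Integrable p) (hp0 : ∀ x, 0 ≤ p x) (c : ℝ) :
    Monotone (fun x => ∫ y in c..x, p y) := by
  intro x y hxy
  have h2 := prim_diff hpi c x y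
  have h3 : 0 ≤ ∫ y in x..y, p y := intervalIntegral.integral_nonneg hxy (fun u _ => hp0 u)
  simp only at h2 ⊢
  linarith

/-- a.e. FTC for primitives of nonneg integrable functions. -/
lemma prim_ae_hasDerivAt (hpm : Measurable p) (hpi : Integrable p) (hp0 : ∀ x, 0 ≤ p x) (c : ℝ) :
    ∀ᵐ x, HasDerivAt (fun x => ∫ y in c..x, p y) (p x) x := by
  set P : ℝ → ℝ := fun x => ∫ y in c..x, p y with hP
  have hmono : Monotone P := prim_mono hpi hp0 c
  have hcont : Continuous P := hpi.continuous_primitive c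
  have hSF : ∀ x, hmono.stieltjesFunction x = P x := by
    intro x
    rw [hmono.stieltjesFunction_eq]
    exact rightLim_eq_of_tendsto
      (hcont.continuousAt.mono_left nhdsWithin_le_nhds)
  have hmeas : hmono.stieltjesFunction.measure = volume.withDensity (fun x => ENNReal.ofReal (p x)) := by
    refine Measure.ext_of_Ioc _ _ (fun a b hab => ?_)
    rw [StieltjesFunction.measure_Ioc, hSF, hSF, withDensity_apply _ measurableSet_Ioc]
    have h4 : P b - P a = ∫ y in a..b, p y := prim_diff hpi c a b
    rw [h4, intervalIntegral.integral_of_le hab.le,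
      ofReal_integral_eq_lintegral_ofReal (hpi.integrableOn) (ae_of_all _ hp0)]
  have hrn : (Measure.rnDeriv hmono.stieltjesFunction.measure volume) =ᵐ[volume]
      (fun x => ENNReal.ofReal (p x)) := by
    rw [hmeas]
    exact Measure.rnDeriv_withDensity volume (hpm.ennreal_ofReal)
  filter_upwards [hmono.ae_hasDerivAt, hrn] with x hx hrnx
  rw [hrnx, ENNReal.toReal_ofReal (hp0 x)] at hx
  exact hx

/-- For a monotone continuous function with a.e. derivative `d`, `∫_v^t d ≤ φ t - φ v`. -/
lemma mono_integral_deriv_le {φ d : ℝ → ℝ} (hφm : Monotone φ) (hφc : Continuous φ)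
    (hd : ∀ᵐ x, HasDerivAt φ (d x) x) {v t : ℝ} (hvt : v ≤ t) :
    ∫ r in v..t, d r ≤ φ t - φ v := by
  have hSF : hφm.stieltjesFunction = φ := by
    ext x
    rw [hφm.stieltjesFunction_eq]
    exact rightLim_eq_of_tendsto
      (hφc.continuousAt.mono_left nhdsWithin_le_nhds)
  have hae : ∀ᵐ x, d x = (Measure.rnDeriv hφm.stieltjesFunction.measure volume x).toReal := by
    filter_upwards [hφm.ae_hasDerivAt, hd] with x hx hdx
    exact hdx.unique hx
  rw [intervalIntegral.integral_of_le hvt]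
  calc ∫ r in Ioc v t, d r
      = ∫ r in Ioc v t, (Measure.rnDeriv hφm.stieltjesFunction.measure volume r).toReal :=
        integral_congr_ae (ae_restrict_of_ae hae)
    _ ≤ (hφm.stieltjesFunction.measure (Ioc v t)).toReal := by
        apply Measure.setIntegral_toReal_rnDeriv_le
        rw [StieltjesFunction.measure_Ioc]
        exact ENNReal.ofReal_ne_top
    _ = φ t - φ v := by
        rw [StieltjesFunction.measure_Ioc, congrFun hSF t, congrFun hSF v,
          ENNReal.toReal_ofReal (by linarith [hφm hvt])]


lemma expPrim_integral_le (hpm : Measurable p) (hpi : Integrable p) (hp0 : ∀ x, 0 ≤ p x)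
    (c : ℝ) {v t : ℝ} (hvt : v ≤ t) :
    ∫ r in v..t, p r * Real.exp (∫ y in c..r, p y)
      ≤ Real.exp (∫ y in c..t, p y) - Real.exp (∫ y in c..v, p y) := by
  have hmono : Monotone (fun x => Real.exp (∫ y in c..x, p y)) :=
    fun a b hab => Real.exp_le_exp.2 (prim_mono hpi hp0 c hab)
  have hcont : Continuous (fun x => Real.exp (∫ y in c..x, p y)) :=
    Real.continuous_exp.comp (hpi.continuous_primitive c)
  have hd : ∀ᵐ x, HasDerivAt (fun x => Real.exp (∫ y in c..x, p y))
      (p x * Real.exp (∫ y in c..x, p y)) x := by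
    filter_upwards [prim_ae_hasDerivAt hpm hpi hp0 c] with x hx
    have := hx.exp
    simpa [mul_comm] using this
  exact mono_integral_deriv_le hmono hcont hd hvt

lemma expPrimNeg_integral_le (hpm : Measurable p) (hpi : Integrable p) (hp0 : ∀ x, 0 ≤ p x)
    (c : ℝ) {v t : ℝ} (hvt : v ≤ t) :
    ∫ r in v..t, p r * Real.exp (-∫ y in c..r, p y)
      ≤ Real.exp (-∫ y in c..v, p y) - Real.exp (-∫ y in c..t, p y) := by
  have hmono : Monotone (fun x => -Real.exp (-∫ y in c..x, p y)) := by
    intro a b hab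
    simp only [neg_le_neg_iff, Real.exp_le_exp, neg_le_neg_iff]
    exact prim_mono hpi hp0 c hab
  have hcont : Continuous (fun x => -Real.exp (-∫ y in c..x, p y)) :=
    (Real.continuous_exp.comp (hpi.continuous_primitive c).neg).neg
  have hd : ∀ᵐ x, HasDerivAt (fun x => -Real.exp (-∫ y in c..x, p y))
      (p x * Real.exp (-∫ y in c..x, p y)) x := by
    filter_upwards [prim_ae_hasDerivAt hpm hpi hp0 c] with x hx
    have := (hx.neg.exp).neg
    simpa [mul_comm, Pi.neg_def] using this
  have := mono_integral_deriv_le hmono hcont hd hvt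
  linarith


/-- Fubini swap on a triangle: `∫_α^t F r (∫_α^r G) dr = ∫_α^t G v (∫_v^t F) dv`. -/
lemma triangle_swap {α t : ℝ} (hαt : α ≤ t) (F G : ℝ → ℝ)
    (hFm : Measurable F) (hGm : Measurable G)
    (hFi : IntegrableOn F (Ioc α t)) (hGi : IntegrableOn G (Ioc α t)) :
    ∫ r in α..t, F r * ∫ v in α..r, G v = ∫ v in α..t, G v * ∫ r in v..t, F r := by
  set μ := volume.restrict (Ioc α t) with hμ
  have hK : Integrable (fun z : ℝ × ℝ => if z.2 ≤ z.1 then F z.1 * G z.2 else 0) (μ.prod μ) := by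
    have hprod : Integrable (fun z : ℝ × ℝ => F z.1 * G z.2) (μ.prod μ) := hFi.mul_prod hGi
    refine hprod.norm.mono' ?_ ?_
    · apply Measurable.aestronglyMeasurable
      exact Measurable.ite (measurableSet_le measurable_snd measurable_fst)
        ((hFm.comp measurable_fst).mul (hGm.comp measurable_snd)) measurable_const
    · refine ae_of_all _ (fun z => ?_)
      by_cases hz : z.2 ≤ z.1 <;> simp [hz, abs_nonneg] <;> positivity
  have hswap := integral_integral_swap (f := fun r v => if v ≤ r then F r * G v else 0) hK
  have hL : ∫ r, (∫ v, (if v ≤ r then F r * G v else 0) ∂μ) ∂μ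
      = ∫ r in α..t, F r * ∫ v in α..r, G v := by
    rw [intervalIntegral.integral_of_le hαt]
    refine setIntegral_congr_fun measurableSet_Ioc (fun r hr => ?_)
    have h1 : (fun v => if v ≤ r then F r * G v else 0)
        = (Iic r).indicator (fun v => F r * G v) := by
      ext v; simp [Set.indicator_apply, Set.mem_Iic]
    rw [h1, hμ, integral_indicator measurableSet_Iic, Measure.restrict_restrict measurableSet_Iic]
    have h2 : Iic r ∩ Ioc α t = Ioc α r := by
      ext v; simp only [mem_inter_iff, mem_Iic, mem_Ioc]
      constructor
      · rintro ⟨h3, h4, h5⟩; exact ⟨h4, h3⟩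
      · rintro ⟨h4, h3⟩; exact ⟨h3, h4, h3.trans hr.2⟩
    rw [h2, intervalIntegral.integral_of_le hr.1.le, integral_const_mul]
  have hR : ∫ v, (∫ r, (if v ≤ r then F r * G v else 0) ∂μ) ∂μ
      = ∫ v in α..t, G v * ∫ r in v..t, F r := by
    rw [intervalIntegral.integral_of_le hαt]
    refine setIntegral_congr_fun measurableSet_Ioc (fun v hv => ?_)
    have h1 : (fun r => if v ≤ r then F r * G v else 0)
        = (Ici v).indicator (fun r => F r * G v) := by
      ext r; simp [Set.indicator_apply, Set.mem_Ici]
    rw [h1, hμ, integral_indicator measurableSet_Ici, Measure.restrict_restrict measurableSet_Ici]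
    have h2 : Ici v ∩ Ioc α t = Icc v t := by
      ext r; simp only [mem_inter_iff, mem_Ici, mem_Ioc, mem_Icc]
      constructor
      · rintro ⟨h3, _, h5⟩; exact ⟨h3, h5⟩
      · rintro ⟨h3, h5⟩; exact ⟨h3, hv.1.trans_le h3, h5⟩
    rw [h2, integral_Icc_eq_integral_Ioc, intervalIntegral.integral_of_le hv.2,
      integral_mul_const, mul_comm]
  rw [← hL, ← hR]
  exact hswap

/-- Mirrored Fubini swap: `∫_x^β F r (∫_r^β G) dr = ∫_x^β G v (∫_x^v F) dv`. -/
lemma triangle_swap' {x β : ℝ} (hxβ : x ≤ β) (F G : ℝ → ℝ)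
    (hFm : Measurable F) (hGm : Measurable G)
    (hFi : IntegrableOn F (Ioc x β)) (hGi : IntegrableOn G (Ioc x β)) :
    ∫ r in x..β, F r * ∫ v in r..β, G v = ∫ v in x..β, G v * ∫ r in x..v, F r := by
  set μ := volume.restrict (Ioc x β) with hμ
  have hK : Integrable (fun z : ℝ × ℝ => if z.1 ≤ z.2 then F z.1 * G z.2 else 0) (μ.prod μ) := by
    have hprod : Integrable (fun z : ℝ × ℝ => F z.1 * G z.2) (μ.prod μ) := hFi.mul_prod hGi
    refine hprod.norm.mono' ?_ ?_
    · apply Measurable.aestronglyMeasurable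
      exact Measurable.ite (measurableSet_le measurable_fst measurable_snd)
        ((hFm.comp measurable_fst).mul (hGm.comp measurable_snd)) measurable_const
    · refine ae_of_all _ (fun z => ?_)
      by_cases hz : z.1 ≤ z.2 <;> simp [hz, abs_nonneg] <;> positivity
  have hswap := integral_integral_swap (f := fun r v => if r ≤ v then F r * G v else 0) hK
  have hL : ∫ r, (∫ v, (if r ≤ v then F r * G v else 0) ∂μ) ∂μ
      = ∫ r in x..β, F r * ∫ v in r..β, G v := by
    rw [intervalIntegral.integral_of_le hxβ]
    refine setIntegral_congr_fun measurableSet_Ioc (fun r hr => ?_)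
    have h1 : (fun v => if r ≤ v then F r * G v else 0)
        = (Ici r).indicator (fun v => F r * G v) := by
      ext v; simp [Set.indicator_apply, Set.mem_Ici]
    rw [h1, hμ, integral_indicator measurableSet_Ici, Measure.restrict_restrict measurableSet_Ici]
    have h2 : Ici r ∩ Ioc x β = Icc r β := by
      ext v; simp only [mem_inter_iff, mem_Ici, mem_Ioc, mem_Icc]
      constructor
      · rintro ⟨h3, _, h5⟩; exact ⟨h3, h5⟩
      · rintro ⟨h3, h5⟩; exact ⟨h3, hr.1.trans_le h3, h5⟩
    rw [h2, integral_Icc_eq_integral_Ioc, intervalIntegral.integral_of_le hr.2,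
      integral_const_mul]
  have hR : ∫ v, (∫ r, (if r ≤ v then F r * G v else 0) ∂μ) ∂μ
      = ∫ v in x..β, G v * ∫ r in x..v, F r := by
    rw [intervalIntegral.integral_of_le hxβ]
    refine setIntegral_congr_fun measurableSet_Ioc (fun v hv => ?_)
    have h1 : (fun r => if r ≤ v then F r * G v else 0)
        = (Iic v).indicator (fun r => F r * G v) := by
      ext r; simp [Set.indicator_apply, Set.mem_Iic]
    rw [h1, hμ, integral_indicator measurableSet_Iic, Measure.restrict_restrict measurableSet_Iic]
    have h2 : Iic v ∩ Ioc x β = Ioc x v := by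
      ext r; simp only [mem_inter_iff, mem_Iic, mem_Ioc]
      constructor
      · rintro ⟨h3, h4, _⟩; exact ⟨h4, h3⟩
      · rintro ⟨h4, h3⟩; exact ⟨h3, h4, h3.trans hv.2⟩
    rw [h2, intervalIntegral.integral_of_le hv.1.le, integral_mul_const, mul_comm]
  rw [← hL, ← hR]
  exact hswap


/-- integrable × (bounded measurable) is integrable. -/
lemma integrable_mul_bdd_global {p f : ℝ → ℝ} (hpi : Integrable p) (hfm : AEStronglyMeasurable f volume)
    {C : ℝ} (hC : ∀ x, |f x| ≤ C) : Integrable (fun x => p x * f x) := by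
  have h := Integrable.bdd_mul (c := C) hpi hfm (ae_of_all _ (fun x => by simpa using hC x))
  simpa [mul_comm] using h

/-- Forward Gronwall, globally bounded version. -/
lemma gronwall_fwd_aux {α β : ℝ} (hαβ : α ≤ β) (p a u : ℝ → ℝ)
    (hpm : Measurable p) (hpi : Integrable p) (hp0 : ∀ x, 0 ≤ p x)
    (ham : Measurable a) (hum : Measurable u)
    {Ka M : ℝ} (ha : ∀ x, a x ∈ Icc 0 Ka) (hu : ∀ x, u x ∈ Icc 0 M)
    (hyp : ∀ x ∈ Icc α β, u x ≤ a x + ∫ r in α..x, p r * u r) :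
    ∀ x ∈ Icc α β, u x ≤ a x + ∫ r in α..x, a r * p r * Real.exp (∫ y in r..x, p y) := by
  set P : ℝ → ℝ := fun x => ∫ y in α..x, p y with hPdef
  have hPmono : Monotone P := prim_mono hpi hp0 α
  have hPcont : Continuous P := hpi.continuous_primitive α
  have hPα : P α = 0 := intervalIntegral.integral_same
  have hP0 : ∀ x, α ≤ x → 0 ≤ P x := fun x hx => hPα ▸ hPmono hx
  -- global bound for P
  set B : ℝ := ∫ y, p y with hBdef
  have hPB : ∀ x, |P x| ≤ B := by
    intro x
    have h1 : ‖∫ y in α..x, p y‖ ≤ ∫ y in Ι α x, ‖p y‖ :=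
      intervalIntegral.norm_integral_le_integral_norm_uIoc
    have h2 : ∫ y in Ι α x, ‖p y‖ ≤ ∫ y, ‖p y‖ :=
      setIntegral_le_integral hpi.norm (ae_of_all _ (fun y => norm_nonneg _))
    have h3 : ∫ y, ‖p y‖ = B := by
      rw [hBdef]; exact integral_congr_ae (ae_of_all _ (fun y => by
        simp [Real.norm_eq_abs, abs_of_nonneg (hp0 y)]))
    calc |P x| = ‖∫ y in α..x, p y‖ := by rw [Real.norm_eq_abs]
      _ ≤ ∫ y in Ι α x, ‖p y‖ := h1
      _ ≤ B := h3 ▸ h2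
  have hB0 : 0 ≤ B := le_trans (abs_nonneg _) ((hPα ▸ hPB α).trans (le_refl B))
  have hKa0 : 0 ≤ Ka := le_trans (ha α).1 (ha α).2
  -- the kernel G and its primitive Q
  set G : ℝ → ℝ := fun v => a v * p v * Real.exp (-P v) with hGdef
  have hGm : Measurable G := ((ham.mul hpm).mul (hPcont.neg.rexp.measurable))
  have hG0 : ∀ v, 0 ≤ G v :=
    fun v => mul_nonneg (mul_nonneg (ha v).1 (hp0 v)) (Real.exp_nonneg _)
  have hGbd : ∀ v, |a v * Real.exp (-P v)| ≤ Ka * Real.exp B := by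
    intro v
    rw [abs_mul]
    apply mul_le_mul
    · rw [abs_of_nonneg (ha v).1]; exact (ha v).2
    · rw [abs_of_nonneg (Real.exp_nonneg _)]
      exact Real.exp_le_exp.2 (le_trans (neg_le_abs _) (by simpa using (hPB v)))
    · exact abs_nonneg _
    · exact hKa0
  have hGi : Integrable G := by
    have := integrable_mul_bdd_global hpi ((ham.mul hPcont.neg.rexp.measurable).aestronglyMeasurable)
      (C := Ka * Real.exp B) hGbd
    apply this.congr
    refine ae_of_all _ (fun v => by simp only [hGdef, Pi.mul_apply, Pi.neg_apply]; ring)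
  set Q : ℝ → ℝ := fun x => ∫ v in α..x, G v with hQdef
  have hQcont : Continuous Q := hGi.continuous_primitive α
  set CG : ℝ := ∫ v, |G v| with hCGdef
  have hQbd : ∀ x, |Q x| ≤ CG := by
    intro x
    have h1 : ‖∫ v in α..x, G v‖ ≤ ∫ v in Ι α x, ‖G v‖ :=
      intervalIntegral.norm_integral_le_integral_norm_uIoc
    have h2 : ∫ v in Ι α x, ‖G v‖ ≤ ∫ v, ‖G v‖ :=
      setIntegral_le_integral hGi.norm (ae_of_all _ (fun y => norm_nonneg _))
    calc |Q x| ≤ ∫ v in Ι α x, ‖G v‖ := h1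
      _ ≤ ∫ v, ‖G v‖ := h2
      _ = CG := by simp [hCGdef, Real.norm_eq_abs]
  have hCG0 : 0 ≤ CG := le_trans (abs_nonneg (Q α)) (hQbd α)
  -- the supersolution S
  set S : ℝ → ℝ := fun x => a x + Real.exp (P x) * Q x with hSdef
  have hSm : Measurable S := ham.add (hPcont.rexp.measurable.mul hQcont.measurable)
  have hSbd : ∀ x, |S x| ≤ Ka + Real.exp B * CG := by
    intro x
    refine (abs_add_le _ _).trans (add_le_add ?_ ?_)
    · rw [abs_of_nonneg (ha x).1]; exact (ha x).2
    · rw [abs_mul, abs_of_nonneg (Real.exp_nonneg _)]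
      exact mul_le_mul (Real.exp_le_exp.2 ((le_abs_self _).trans (hPB x))) (hQbd x)
        (abs_nonneg _) (Real.exp_nonneg _)
  have hS0 : ∀ x ∈ Icc α β, 0 ≤ S x := by
    intro x hx
    have hQ0 : 0 ≤ Q x := intervalIntegral.integral_nonneg hx.1 (fun v _ => hG0 v)
    exact add_nonneg (ha x).1 (mul_nonneg (Real.exp_nonneg _) hQ0)
  -- constants
  set C : ℝ := max M 0 with hCdef
  have hC0 : 0 ≤ C := le_max_right _ _
  set q : ℝ := 1 - Real.exp (-P β) with hqdef
  have hq0 : 0 ≤ q := by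
    have : Real.exp (-P β) ≤ 1 := Real.exp_le_one_iff.2 (by linarith [hP0 β hαβ])
    linarith
  have hq1 : q < 1 := by
    have : 0 < Real.exp (-P β) := Real.exp_pos _
    linarith
  -- integrability helpers
  have hpu : Integrable (fun r => p r * u r) :=
    integrable_mul_bdd_global hpi hum.aestronglyMeasurable (C := max M 0)
      (fun x => abs_le.2 ⟨by linarith [(hu x).1, le_max_right M 0], le_max_of_le_left (hu x).2⟩)
  have hpa : Integrable (fun r => p r * a r) :=
    integrable_mul_bdd_global hpi ham.aestronglyMeasurable (C := Ka)
      (fun x => abs_le.2 ⟨by linarith [(ha x).1], (ha x).2⟩)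
  have hpS : Integrable (fun r => p r * S r) :=
    integrable_mul_bdd_global hpi hSm.aestronglyMeasurable (C := Ka + Real.exp B * CG) hSbd
  have hpE : Integrable (fun r => p r * Real.exp (P r)) :=
    integrable_mul_bdd_global hpi hPcont.rexp.aestronglyMeasurable (C := Real.exp B)
      (fun x => by
        rw [abs_of_nonneg (Real.exp_nonneg _)]
        exact Real.exp_le_exp.2 ((le_abs_self _).trans (hPB x)))
  -- supersolution property
  have hsuper : ∀ x ∈ Icc α β, a x + (∫ r in α..x, p r * S r) ≤ S x := by
    intro x hx
    have hαx : α ≤ x := hx.1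
    have hexpand : ∫ r in α..x, p r * S r
        = (∫ r in α..x, p r * a r) + ∫ r in α..x, (p r * Real.exp (P r)) * ∫ v in α..r, G v := by
      rw [← intervalIntegral.integral_add hpa.intervalIntegrable]
      · apply intervalIntegral.integral_congr
        intro r _
        simp only [hSdef, hQdef]
        ring
      · exact (integrable_mul_bdd_global hpE (hQcont.aestronglyMeasurable) (C := CG) hQbd
          ).intervalIntegrable
    have hswap : ∫ r in α..x, (p r * Real.exp (P r)) * ∫ v in α..r, G v
        = ∫ v in α..x, G v * ∫ r in v..x, p r * Real.exp (P r) := by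
      exact triangle_swap hαx _ _ (hpm.mul hPcont.rexp.measurable) hGm
        hpE.integrableOn hGi.integrableOn
    have hmono1 : ∫ v in α..x, G v * ∫ r in v..x, p r * Real.exp (P r)
        ≤ ∫ v in α..x, G v * (Real.exp (P x) - Real.exp (P v)) := by
      apply intervalIntegral.integral_mono_on hαx
      · refine (integrable_mul_bdd_global hGi ?_ (C := 2 * Real.exp B * B) ?_).intervalIntegrable
        · have hc : Continuous (fun v : ℝ => ∫ r in α..v, p r * Real.exp (P r)) :=
            hpE.continuous_primitive α
          exact ((continuous_const.sub hc).congr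
            (fun v => prim_diff hpE α v x)).aestronglyMeasurable
        · intro v
          have hpEabs : Integrable (fun r => |p r| * Real.exp (P r)) :=
            hpE.abs.congr (ae_of_all _ (fun r => by
              simp [abs_mul, abs_of_nonneg (Real.exp_nonneg (P r))]))
          have h1 : |∫ r in v..x, p r * Real.exp (P r)| ≤ ∫ r, |p r| * Real.exp (P r) := by
            have ha1 : ‖∫ r in v..x, p r * Real.exp (P r)‖ ≤ ∫ r in Ι v x, ‖p r * Real.exp (P r)‖ :=
              intervalIntegral.norm_integral_le_integral_norm_uIoc
            have ha2 : ∫ r in Ι v x, ‖p r * Real.exp (P r)‖ ≤ ∫ r, ‖p r * Real.exp (P r)‖ :=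
              setIntegral_le_integral hpE.norm (ae_of_all _ (fun y => norm_nonneg _))
            simpa [Real.norm_eq_abs, abs_mul, abs_of_nonneg (Real.exp_nonneg _)]
              using ha1.trans ha2
          refine h1.trans ?_
          have h2 : ∀ r, |p r| * Real.exp (P r) ≤ Real.exp B * p r := by
            intro r
            rw [abs_of_nonneg (hp0 r), mul_comm]
            exact mul_le_mul_of_nonneg_right
              (Real.exp_le_exp.2 ((le_abs_self _).trans (hPB r))) (hp0 r)
          calc ∫ r, |p r| * Real.exp (P r) ≤ ∫ r, Real.exp B * p r :=
                integral_mono hpEabs (hpi.const_mul _) h2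
            _ = Real.exp B * B := by rw [integral_const_mul]
            _ ≤ 2 * Real.exp B * B := by nlinarith [Real.exp_pos B]
      · refine (integrable_mul_bdd_global hGi ?_ (C := 2 * Real.exp B) ?_).intervalIntegrable
        · exact (continuous_const.sub hPcont.rexp).aestronglyMeasurable
        · intro v
          have e1 : Real.exp (P x) ≤ Real.exp B :=
            Real.exp_le_exp.2 ((le_abs_self _).trans (hPB x))
          have e2 : 0 < Real.exp (P v) := Real.exp_pos _
          have e3 : Real.exp (P v) ≤ Real.exp B :=
            Real.exp_le_exp.2 ((le_abs_self _).trans (hPB v))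
          rw [abs_le]
          constructor <;> nlinarith [Real.exp_pos (P x)]
      · intro v hv
        apply mul_le_mul_of_nonneg_left _ (hG0 v)
        have := expPrim_integral_le hpm hpi hp0 α (v := v) (t := x) hv.2
        simpa only [← hPdef] using this
    have hcollect : (∫ r in α..x, p r * a r)
        + ∫ v in α..x, G v * (Real.exp (P x) - Real.exp (P v)) = Real.exp (P x) * Q x := by
      rw [← intervalIntegral.integral_add hpa.intervalIntegrable]
      · rw [hQdef, ← intervalIntegral.integral_const_mul]
        apply intervalIntegral.integral_congr
        intro r _
        simp only [hGdef]
        have hrr : Real.exp (-P r) * Real.exp (P r) = 1 := by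
          rw [← Real.exp_add]; simp
        linear_combination (-(a r * p r)) * hrr
      · refine (integrable_mul_bdd_global hGi ?_ (C := 2 * Real.exp B) ?_).intervalIntegrable
        · exact (continuous_const.sub hPcont.rexp).aestronglyMeasurable
        · intro v
          have e1 : Real.exp (P x) ≤ Real.exp B :=
            Real.exp_le_exp.2 ((le_abs_self _).trans (hPB x))
          have e3 : Real.exp (P v) ≤ Real.exp B :=
            Real.exp_le_exp.2 ((le_abs_self _).trans (hPB v))
          rw [abs_le]
          constructor <;> nlinarith [Real.exp_pos (P x), Real.exp_pos (P v)]
    have : ∫ r in α..x, p r * S r ≤ Real.exp (P x) * Q x := by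
      rw [hexpand, hswap, ← hcollect]
      linarith [hmono1]
    simp only [hSdef]
    linarith [this]
  -- contraction estimate
  have hcontract : ∀ x ∈ Icc α β,
      (∫ r in α..x, p r * Real.exp (P r)) ≤ q * Real.exp (P x) := by
    intro x hx
    have h1 : ∫ r in α..x, p r * Real.exp (P r) ≤ Real.exp (P x) - Real.exp (P α) :=
      expPrim_integral_le hpm hpi hp0 α (v := α) (t := x) hx.1
    rw [hPα, Real.exp_zero] at h1
    have h2 : Real.exp (-P β) * Real.exp (P x) ≤ 1 := by
      rw [← Real.exp_add]
      exact Real.exp_le_one_iff.2 (by linarith [hPmono hx.2])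
    have : Real.exp (P x) - 1 ≤ q * Real.exp (P x) := by
      simp only [hqdef]; nlinarith
    linarith
  -- main induction
  have key : ∀ n : ℕ, ∀ x ∈ Icc α β, u x ≤ S x + C * q ^ n * Real.exp (P x) := by
    intro n
    induction n with
    | zero =>
      intro x hx
      have h1 : u x ≤ C := le_max_of_le_left (hu x).2
      have h2 : 1 ≤ Real.exp (P x) := Real.one_le_exp (hP0 x hx.1)
      have h3 := hS0 x hx
      nlinarith
    | succ n ih =>
      intro x hx
      have hαx : α ≤ x := hx.1
      have h1 := hyp x hx
      have hmono2 : ∫ r in α..x, p r * u r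
          ≤ ∫ r in α..x, (p r * S r + (C * q ^ n) * (p r * Real.exp (P r))) := by
        apply intervalIntegral.integral_mono_on hαx hpu.intervalIntegrable
        · exact (hpS.add ((hpE.const_mul _))).intervalIntegrable
        · intro r hr
          have h2 := ih r ⟨hr.1, hr.2.trans hx.2⟩
          have h3 := hp0 r
          nlinarith
      have hsplit : ∫ r in α..x, (p r * S r + (C * q ^ n) * (p r * Real.exp (P r)))
          = (∫ r in α..x, p r * S r) + (C * q ^ n) * ∫ r in α..x, p r * Real.exp (P r) := by
        rw [intervalIntegral.integral_add hpS.intervalIntegrable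
          ((hpE.const_mul _).intervalIntegrable), intervalIntegral.integral_const_mul]
      have h4 := hsuper x hx
      have h5 := hcontract x hx
      have h6 : (C * q ^ n) * (∫ r in α..x, p r * Real.exp (P r))
          ≤ (C * q ^ n) * (q * Real.exp (P x)) :=
        mul_le_mul_of_nonneg_left h5 (by positivity)
      have : u x ≤ S x + (C * q ^ n) * (q * Real.exp (P x)) := by linarith
      calc u x ≤ S x + (C * q ^ n) * (q * Real.exp (P x)) := this
        _ = S x + C * q ^ (n + 1) * Real.exp (P x) := by ring
  -- pass to the limit
  intro x hx
  have hlim : Filter.Tendsto (fun n : ℕ => S x + C * q ^ n * Real.exp (P x))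
      Filter.atTop (nhds (S x)) := by
    have h0 : Filter.Tendsto (fun n : ℕ => q ^ n) Filter.atTop (nhds 0) :=
      tendsto_pow_atTop_nhds_zero_of_lt_one hq0 hq1
    have h1 : Filter.Tendsto (fun n : ℕ => S x + C * q ^ n * Real.exp (P x))
        Filter.atTop (nhds (S x + C * 0 * Real.exp (P x))) := by
      apply Filter.Tendsto.const_add
      exact ((h0.const_mul C).mul_const _)
    simpa using h1
  have hSx : u x ≤ S x := ge_of_tendsto' hlim (fun n => key n x hx)
  -- rewrite S in the required form
  have hfinal : S x = a x + ∫ r in α..x, a r * p r * Real.exp (∫ y in r..x, p y) := by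
    simp only [hSdef, hQdef]
    congr 1
    rw [← intervalIntegral.integral_const_mul]
    apply intervalIntegral.integral_congr
    intro r _
    simp only [hGdef]
    have : (∫ y in r..x, p y) = P x - P r := (prim_diff hpi α r x).symm
    rw [this, Real.exp_sub]
    have := Real.exp_pos (P r)
    field_simp [Real.exp_neg]
    ring_nf
    rw [mul_assoc, ← Real.exp_add]; simp
  rwa [hfinal] at hSx


/-- Backward Gronwall, globally bounded version. -/
lemma gronwall_bwd_aux {α β : ℝ} (hαβ : α ≤ β) (p a u : ℝ → ℝ)
    (hpm : Measurable p) (hpi : Integrable p) (hp0 : ∀ x, 0 ≤ p x)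
    (ham : Measurable a) (hum : Measurable u)
    {Ka M : ℝ} (ha : ∀ x, a x ∈ Icc 0 Ka) (hu : ∀ x, u x ∈ Icc 0 M)
    (hyp : ∀ x ∈ Icc α β, u x ≤ a x + ∫ r in x..β, p r * u r) :
    ∀ x ∈ Icc α β, u x ≤ a x + ∫ r in x..β, a r * p r * Real.exp (∫ y in x..r, p y) := by
  set P : ℝ → ℝ := fun x => ∫ y in α..x, p y with hPdef
  have hPmono : Monotone P := prim_mono hpi hp0 α
  have hPcont : Continuous P := hpi.continuous_primitive α
  have hPα : P α = 0 := intervalIntegral.integral_same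
  have hP0 : ∀ x, α ≤ x → 0 ≤ P x := fun x hx => hPα ▸ hPmono hx
  set B : ℝ := ∫ y, p y with hBdef
  have hPB : ∀ x, |P x| ≤ B := by
    intro x
    have h1 : ‖∫ y in α..x, p y‖ ≤ ∫ y in Ι α x, ‖p y‖ :=
      intervalIntegral.norm_integral_le_integral_norm_uIoc
    have h2 : ∫ y in Ι α x, ‖p y‖ ≤ ∫ y, ‖p y‖ :=
      setIntegral_le_integral hpi.norm (ae_of_all _ (fun y => norm_nonneg _))
    have h3 : ∫ y, ‖p y‖ = B := by
      rw [hBdef]; exact integral_congr_ae (ae_of_all _ (fun y => by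
        simp [Real.norm_eq_abs, abs_of_nonneg (hp0 y)]))
    calc |P x| = ‖∫ y in α..x, p y‖ := by rw [Real.norm_eq_abs]
      _ ≤ ∫ y in Ι α x, ‖p y‖ := h1
      _ ≤ B := h3 ▸ h2
  have hB0 : 0 ≤ B := le_trans (abs_nonneg _) ((hPα ▸ hPB α).trans (le_refl B))
  have hKa0 : 0 ≤ Ka := le_trans (ha α).1 (ha α).2
  set G : ℝ → ℝ := fun v => a v * p v * Real.exp (P v) with hGdef
  have hGm : Measurable G := ((ham.mul hpm).mul (hPcont.rexp.measurable))
  have hG0 : ∀ v, 0 ≤ G v :=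
    fun v => mul_nonneg (mul_nonneg (ha v).1 (hp0 v)) (Real.exp_nonneg _)
  have hGi : Integrable G := by
    have hGbd : ∀ v, |a v * Real.exp (P v)| ≤ Ka * Real.exp B := by
      intro v
      rw [abs_mul]
      apply mul_le_mul
      · rw [abs_of_nonneg (ha v).1]; exact (ha v).2
      · rw [abs_of_nonneg (Real.exp_nonneg _)]
        exact Real.exp_le_exp.2 ((le_abs_self _).trans (hPB v))
      · exact abs_nonneg _
      · exact hKa0
    have := integrable_mul_bdd_global hpi ((ham.mul hPcont.rexp.measurable).aestronglyMeasurable)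
      (C := Ka * Real.exp B) hGbd
    apply this.congr
    refine ae_of_all _ (fun v => by simp only [hGdef, Pi.mul_apply, Pi.neg_apply]; ring)
  set Q : ℝ → ℝ := fun x => ∫ v in x..β, G v with hQdef
  have hQcont : Continuous Q := by
    have hc : Continuous (fun x : ℝ => ∫ v in α..x, G v) := hGi.continuous_primitive α
    exact ((continuous_const.sub hc).congr (fun x => prim_diff hGi α x β))
  set CG : ℝ := ∫ v, |G v| with hCGdef
  have hQbd : ∀ x, |Q x| ≤ CG := by
    intro x
    have h1 : ‖∫ v in x..β, G v‖ ≤ ∫ v in Ι x β, ‖G v‖ :=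
      intervalIntegral.norm_integral_le_integral_norm_uIoc
    have h2 : ∫ v in Ι x β, ‖G v‖ ≤ ∫ v, ‖G v‖ :=
      setIntegral_le_integral hGi.norm (ae_of_all _ (fun y => norm_nonneg _))
    calc |Q x| ≤ ∫ v in Ι x β, ‖G v‖ := h1
      _ ≤ ∫ v, ‖G v‖ := h2
      _ = CG := by simp [hCGdef, Real.norm_eq_abs]
  have hCG0 : 0 ≤ CG := le_trans (abs_nonneg (Q α)) (hQbd α)
  set S : ℝ → ℝ := fun x => a x + Real.exp (-P x) * Q x with hSdef
  have hSm : Measurable S := ham.add (hPcont.neg.rexp.measurable.mul hQcont.measurable)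
  have hSbd : ∀ x, |S x| ≤ Ka + Real.exp B * CG := by
    intro x
    refine (abs_add_le _ _).trans (add_le_add ?_ ?_)
    · rw [abs_of_nonneg (ha x).1]; exact (ha x).2
    · rw [abs_mul, abs_of_nonneg (Real.exp_nonneg _)]
      exact mul_le_mul (Real.exp_le_exp.2 ((neg_le_abs _).trans (hPB x))) (hQbd x)
        (abs_nonneg _) (Real.exp_nonneg _)
  have hS0 : ∀ x ∈ Icc α β, 0 ≤ S x := by
    intro x hx
    have hQ0 : 0 ≤ Q x := intervalIntegral.integral_nonneg hx.2 (fun v _ => hG0 v)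
    exact add_nonneg (ha x).1 (mul_nonneg (Real.exp_nonneg _) hQ0)
  set C : ℝ := max M 0 with hCdef
  have hC0 : 0 ≤ C := le_max_right _ _
  set q : ℝ := 1 - Real.exp (-P β) with hqdef
  have hq0 : 0 ≤ q := by
    have : Real.exp (-P β) ≤ 1 := Real.exp_le_one_iff.2 (by linarith [hP0 β hαβ])
    linarith
  have hq1 : q < 1 := by
    have : 0 < Real.exp (-P β) := Real.exp_pos _
    linarith
  have hpu : Integrable (fun r => p r * u r) :=
    integrable_mul_bdd_global hpi hum.aestronglyMeasurable (C := max M 0)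
      (fun x => abs_le.2 ⟨by linarith [(hu x).1, le_max_right M 0], le_max_of_le_left (hu x).2⟩)
  have hpa : Integrable (fun r => p r * a r) :=
    integrable_mul_bdd_global hpi ham.aestronglyMeasurable (C := Ka)
      (fun x => abs_le.2 ⟨by linarith [(ha x).1], (ha x).2⟩)
  have hpS : Integrable (fun r => p r * S r) :=
    integrable_mul_bdd_global hpi hSm.aestronglyMeasurable (C := Ka + Real.exp B * CG) hSbd
  have hpE : Integrable (fun r => p r * Real.exp (-P r)) :=
    integrable_mul_bdd_global hpi hPcont.neg.rexp.aestronglyMeasurable (C := Real.exp B)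
      (fun x => by
        rw [abs_of_nonneg (Real.exp_nonneg _)]
        exact Real.exp_le_exp.2 ((neg_le_abs _).trans (hPB x)))
  -- supersolution property
  have hsuper : ∀ x ∈ Icc α β, a x + (∫ r in x..β, p r * S r) ≤ S x := by
    intro x hx
    have hxβ : x ≤ β := hx.2
    have hexpand : ∫ r in x..β, p r * S r
        = (∫ r in x..β, p r * a r) + ∫ r in x..β, (p r * Real.exp (-P r)) * ∫ v in r..β, G v := by
      rw [← intervalIntegral.integral_add hpa.intervalIntegrable]
      · apply intervalIntegral.integral_congr
        intro r _
        simp only [hSdef, hQdef]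
        ring
      · exact (integrable_mul_bdd_global hpE (hQcont.aestronglyMeasurable) (C := CG) hQbd
          ).intervalIntegrable
    have hswap : ∫ r in x..β, (p r * Real.exp (-P r)) * ∫ v in r..β, G v
        = ∫ v in x..β, G v * ∫ r in x..v, p r * Real.exp (-P r) :=
      triangle_swap' hxβ _ _ (hpm.mul hPcont.neg.rexp.measurable) hGm
        hpE.integrableOn hGi.integrableOn
    have hmono1 : ∫ v in x..β, G v * ∫ r in x..v, p r * Real.exp (-P r)
        ≤ ∫ v in x..β, G v * (Real.exp (-P x) - Real.exp (-P v)) := by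
      apply intervalIntegral.integral_mono_on hxβ
      · refine (integrable_mul_bdd_global hGi ?_ (C := 2 * Real.exp B * B) ?_).intervalIntegrable
        · exact (hpE.continuous_primitive x).aestronglyMeasurable
        · intro v
          have hpEabs : Integrable (fun r => |p r| * Real.exp (-P r)) :=
            hpE.abs.congr (ae_of_all _ (fun r => by
              simp [abs_mul, abs_of_nonneg (Real.exp_nonneg (-P r))]))
          have h1 : |∫ r in x..v, p r * Real.exp (-P r)| ≤ ∫ r, |p r| * Real.exp (-P r) := by
            have ha1 : ‖∫ r in x..v, p r * Real.exp (-P r)‖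
                ≤ ∫ r in Ι x v, ‖p r * Real.exp (-P r)‖ :=
              intervalIntegral.norm_integral_le_integral_norm_uIoc
            have ha2 : ∫ r in Ι x v, ‖p r * Real.exp (-P r)‖ ≤ ∫ r, ‖p r * Real.exp (-P r)‖ :=
              setIntegral_le_integral hpE.norm (ae_of_all _ (fun y => norm_nonneg _))
            simpa [Real.norm_eq_abs, abs_mul, abs_of_nonneg (Real.exp_nonneg _)]
              using ha1.trans ha2
          refine h1.trans ?_
          have h2 : ∀ r, |p r| * Real.exp (-P r) ≤ Real.exp B * p r := by
            intro r
            rw [abs_of_nonneg (hp0 r), mul_comm]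
            exact mul_le_mul_of_nonneg_right
              (Real.exp_le_exp.2 ((neg_le_abs _).trans (hPB r))) (hp0 r)
          calc ∫ r, |p r| * Real.exp (-P r) ≤ ∫ r, Real.exp B * p r :=
                integral_mono hpEabs (hpi.const_mul _) h2
            _ = Real.exp B * B := by rw [integral_const_mul]
            _ ≤ 2 * Real.exp B * B := by nlinarith [Real.exp_pos B]
      · refine (integrable_mul_bdd_global hGi ?_ (C := 2 * Real.exp B) ?_).intervalIntegrable
        · exact (continuous_const.sub hPcont.neg.rexp).aestronglyMeasurable
        · intro v
          have e1 : Real.exp (-P x) ≤ Real.exp B :=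
            Real.exp_le_exp.2 ((neg_le_abs _).trans (hPB x))
          have e3 : Real.exp (-P v) ≤ Real.exp B :=
            Real.exp_le_exp.2 ((neg_le_abs _).trans (hPB v))
          rw [abs_le]
          constructor <;> nlinarith [Real.exp_pos (-P x), Real.exp_pos (-P v)]
      · intro v hv
        apply mul_le_mul_of_nonneg_left _ (hG0 v)
        have := expPrimNeg_integral_le hpm hpi hp0 α (v := x) (t := v) hv.1
        simpa only [← hPdef] using this
    have hcollect : (∫ r in x..β, p r * a r)
        + ∫ v in x..β, G v * (Real.exp (-P x) - Real.exp (-P v)) = Real.exp (-P x) * Q x := by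
      rw [← intervalIntegral.integral_add hpa.intervalIntegrable]
      · rw [hQdef, ← intervalIntegral.integral_const_mul]
        apply intervalIntegral.integral_congr
        intro r _
        simp only [hGdef]
        have hrr : Real.exp (P r) * Real.exp (-P r) = 1 := by
          rw [← Real.exp_add]; simp
        linear_combination (-(a r * p r)) * hrr
      · refine (integrable_mul_bdd_global hGi ?_ (C := 2 * Real.exp B) ?_).intervalIntegrable
        · exact (continuous_const.sub hPcont.neg.rexp).aestronglyMeasurable
        · intro v
          have e1 : Real.exp (-P x) ≤ Real.exp B :=
            Real.exp_le_exp.2 ((neg_le_abs _).trans (hPB x))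
          have e3 : Real.exp (-P v) ≤ Real.exp B :=
            Real.exp_le_exp.2 ((neg_le_abs _).trans (hPB v))
          rw [abs_le]
          constructor <;> nlinarith [Real.exp_pos (-P x), Real.exp_pos (-P v)]
    have : ∫ r in x..β, p r * S r ≤ Real.exp (-P x) * Q x := by
      rw [hexpand, hswap, ← hcollect]
      linarith [hmono1]
    simp only [hSdef]
    linarith [this]
  -- contraction estimate
  have hcontract : ∀ x ∈ Icc α β,
      (∫ r in x..β, p r * Real.exp (P β - P r)) ≤ q * Real.exp (P β - P x) := by
    intro x hx
    have h0 : ∫ r in x..β, p r * Real.exp (P β - P r)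
        = Real.exp (P β) * ∫ r in x..β, p r * Real.exp (-P r) := by
      rw [← intervalIntegral.integral_const_mul]
      apply intervalIntegral.integral_congr
      intro r _
      simp only [Real.exp_sub, Real.exp_neg]
      ring
    have h1 : ∫ r in x..β, p r * Real.exp (-P r) ≤ Real.exp (-P x) - Real.exp (-P β) :=
      expPrimNeg_integral_le hpm hpi hp0 α (v := x) (t := β) hx.2
    have e1 : Real.exp (P β) * Real.exp (-P x) = Real.exp (P β - P x) := by
      rw [← Real.exp_add]; ring_nf
    have e2 : Real.exp (P β) * Real.exp (-P β) = 1 := by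
      rw [← Real.exp_add]; simp
    have e3 : Real.exp (-P β) * Real.exp (P β - P x) = Real.exp (-P x) := by
      rw [← Real.exp_add]; ring_nf
    have e4 : Real.exp (-P x) ≤ 1 := Real.exp_le_one_iff.2 (by linarith [hP0 x hx.1])
    have hexpPβ : 0 < Real.exp (P β) := Real.exp_pos _
    have : Real.exp (P β - P x) - 1 ≤ q * Real.exp (P β - P x) := by
      simp only [hqdef]
      nlinarith
    calc ∫ r in x..β, p r * Real.exp (P β - P r)
        = Real.exp (P β) * ∫ r in x..β, p r * Real.exp (-P r) := h0
      _ ≤ Real.exp (P β) * (Real.exp (-P x) - Real.exp (-P β)) :=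
          mul_le_mul_of_nonneg_left h1 (le_of_lt hexpPβ)
      _ = Real.exp (P β - P x) - 1 := by rw [mul_sub, e1, e2]
      _ ≤ q * Real.exp (P β - P x) := this
  -- main induction
  have key : ∀ n : ℕ, ∀ x ∈ Icc α β, u x ≤ S x + C * q ^ n * Real.exp (P β - P x) := by
    intro n
    induction n with
    | zero =>
      intro x hx
      have h1 : u x ≤ C := le_max_of_le_left (hu x).2
      have h2 : 1 ≤ Real.exp (P β - P x) := Real.one_le_exp (by linarith [hPmono hx.2])
      have h3 := hS0 x hx
      nlinarith
    | succ n ih =>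
      intro x hx
      have hxβ : x ≤ β := hx.2
      have h1 := hyp x hx
      have hmono2 : ∫ r in x..β, p r * u r
          ≤ ∫ r in x..β, (p r * S r + (C * q ^ n) * (p r * Real.exp (P β - P r))) := by
        apply intervalIntegral.integral_mono_on hxβ hpu.intervalIntegrable
        · refine (hpS.add (Integrable.const_mul ?_ _)).intervalIntegrable
          have : Integrable (fun r => Real.exp (P β) * (p r * Real.exp (-P r))) :=
            hpE.const_mul _
          apply this.congr
          refine ae_of_all _ (fun r => ?_)
          simp only [Real.exp_sub, Real.exp_neg]
          ring
        · intro r hr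
          have h2 := ih r ⟨hx.1.trans hr.1, hr.2⟩
          have h3 := hp0 r
          nlinarith
      have hsplit : ∫ r in x..β, (p r * S r + (C * q ^ n) * (p r * Real.exp (P β - P r)))
          = (∫ r in x..β, p r * S r)
            + (C * q ^ n) * ∫ r in x..β, p r * Real.exp (P β - P r) := by
        have hInt : Integrable (fun r => p r * Real.exp (P β - P r)) := by
          have : Integrable (fun r => Real.exp (P β) * (p r * Real.exp (-P r))) :=
            hpE.const_mul _
          apply this.congr
          refine ae_of_all _ (fun r => ?_)
          simp only [Real.exp_sub, Real.exp_neg]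
          ring
        rw [intervalIntegral.integral_add hpS.intervalIntegrable
          ((hInt.const_mul _).intervalIntegrable), intervalIntegral.integral_const_mul]
      have h4 := hsuper x hx
      have h5 := hcontract x hx
      have h6 : (C * q ^ n) * (∫ r in x..β, p r * Real.exp (P β - P r))
          ≤ (C * q ^ n) * (q * Real.exp (P β - P x)) :=
        mul_le_mul_of_nonneg_left h5 (by positivity)
      have : u x ≤ S x + (C * q ^ n) * (q * Real.exp (P β - P x)) := by linarith
      calc u x ≤ S x + (C * q ^ n) * (q * Real.exp (P β - P x)) := this
        _ = S x + C * q ^ (n + 1) * Real.exp (P β - P x) := by ring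
  -- pass to the limit
  intro x hx
  have hlim : Filter.Tendsto (fun n : ℕ => S x + C * q ^ n * Real.exp (P β - P x))
      Filter.atTop (nhds (S x)) := by
    have h0 : Filter.Tendsto (fun n : ℕ => q ^ n) Filter.atTop (nhds 0) :=
      tendsto_pow_atTop_nhds_zero_of_lt_one hq0 hq1
    have h1 : Filter.Tendsto (fun n : ℕ => S x + C * q ^ n * Real.exp (P β - P x))
        Filter.atTop (nhds (S x + C * 0 * Real.exp (P β - P x))) := by
      apply Filter.Tendsto.const_add
      exact ((h0.const_mul C).mul_const _)
    simpa using h1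
  have hSx : u x ≤ S x := ge_of_tendsto' hlim (fun n => key n x hx)
  have hfinal : S x = a x + ∫ r in x..β, a r * p r * Real.exp (∫ y in x..r, p y) := by
    simp only [hSdef, hQdef]
    congr 1
    rw [← intervalIntegral.integral_const_mul]
    apply intervalIntegral.integral_congr
    intro r _
    simp only [hGdef]
    have hd : (∫ y in x..r, p y) = P r - P x := (prim_diff hpi α x r).symm
    rw [hd]
    simp only [Real.exp_sub, Real.exp_neg]
    ring
  rwa [hfinal] at hSx


/-- `|∫_u^v w| ≤ ∫ |w|` for globally integrable `w`. -/
lemma prim_norm_le {w : ℝ → ℝ} (hwi : Integrable w) (u v : ℝ) :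
    |∫ y in u..v, w y| ≤ ∫ y, |w y| := by
  have h1 : ‖∫ y in u..v, w y‖ ≤ ∫ y in Ι u v, ‖w y‖ :=
    intervalIntegral.norm_integral_le_integral_norm_uIoc
  have h2 : ∫ y in Ι u v, ‖w y‖ ≤ ∫ y, ‖w y‖ :=
    setIntegral_le_integral hwi.norm (ae_of_all _ (fun y => norm_nonneg _))
  simpa [Real.norm_eq_abs] using h1.trans h2

lemma prim_abs_le (hpi : Integrable p) (hp0 : ∀ x, 0 ≤ p x) (u v : ℝ) :
    |∫ y in u..v, p y| ≤ ∫ y, p y := by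
  refine (prim_norm_le hpi u v).trans (le_of_eq ?_)
  exact integral_congr_ae (ae_of_all _ (fun y => abs_of_nonneg (hp0 y)))

/-- `IntegrableOn` for products `p * f` with `f` bounded on the set. -/
lemma integrableOn_mul_bdd {f : ℝ → ℝ} (hpm : Measurable p) (hpi : Integrable p)
    (hp0 : ∀ x, 0 ≤ p x) (hfm : AEStronglyMeasurable f volume) {s : Set ℝ}
    (hsm : MeasurableSet s) {C : ℝ} (hC : ∀ x ∈ s, |f x| ≤ C) :
    IntegrableOn (fun x => p x * f x) s := by
  refine Integrable.mono' ((hpi.const_mul C).integrableOn) ?_ ?_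
  · exact (hpm.aestronglyMeasurable.mul hfm).restrict
  · refine (ae_restrict_iff' hsm).2 (ae_of_all _ (fun x hx => ?_))
    rw [Real.norm_eq_abs, abs_mul, abs_of_nonneg (hp0 x)]
    calc p x * |f x| ≤ p x * C := mul_le_mul_of_nonneg_left (hC x hx) (hp0 x)
      _ = C * p x := mul_comm _ _

/-- Forward Gronwall on an interval. -/
lemma gronwall_fwd {α β : ℝ} (hαβ : α ≤ β) (p a u : ℝ → ℝ)
    (hpm : Measurable p) (hpi : Integrable p) (hp0 : ∀ x, 0 ≤ p x)
    (ham : Measurable a) (hum : Measurable u)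
    {Ka M : ℝ} (ha : ∀ x ∈ Icc α β, a x ∈ Icc 0 Ka) (hu : ∀ x ∈ Icc α β, u x ∈ Icc 0 M)
    (hyp : ∀ x ∈ Icc α β, u x ≤ a x + ∫ r in α..x, p r * u r) :
    ∀ x ∈ Icc α β, u x ≤ a x + ∫ r in α..x, a r * p r * Real.exp (∫ y in r..x, p y) := by
  have hKa0 : 0 ≤ Ka := le_trans (ha α ⟨le_refl _, hαβ⟩).1 (ha α ⟨le_refl _, hαβ⟩).2
  have hM0 : 0 ≤ M := le_trans (hu α ⟨le_refl _, hαβ⟩).1 (hu α ⟨le_refl _, hαβ⟩).2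
  set a' : ℝ → ℝ := fun x => if x ∈ Icc α β then a x else 0 with ha'def
  set u' : ℝ → ℝ := fun x => if x ∈ Icc α β then u x else 0 with hu'def
  have ha'm : Measurable a' := Measurable.ite measurableSet_Icc ham measurable_const
  have hu'm : Measurable u' := Measurable.ite measurableSet_Icc hum measurable_const
  have ha' : ∀ x, a' x ∈ Icc 0 Ka := by
    intro x; by_cases hx : x ∈ Icc α β <;> simp only [ha'def, hx, if_true, if_false]
    · exact ha x hx
    · exact ⟨le_refl _, hKa0⟩
  have hu' : ∀ x, u' x ∈ Icc 0 M := by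
    intro x; by_cases hx : x ∈ Icc α β <;> simp only [hu'def, hx, if_true, if_false]
    · exact hu x hx
    · exact ⟨le_refl _, hM0⟩
  have hsub : ∀ {x}, x ∈ Icc α β → uIcc α x ⊆ Icc α β := by
    intro x hx
    rw [uIcc_of_le hx.1]
    exact Icc_subset_Icc (le_refl _) hx.2
  have hcongr_u : ∀ x ∈ Icc α β, (∫ r in α..x, p r * u' r) = ∫ r in α..x, p r * u r := by
    intro x hx
    refine intervalIntegral.integral_congr (fun r hr => ?_)
    have : r ∈ Icc α β := hsub hx hr
    simp only [hu'def, this, if_true]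
  have hyp' : ∀ x ∈ Icc α β, u' x ≤ a' x + ∫ r in α..x, p r * u' r := by
    intro x hx
    rw [hcongr_u x hx]
    simp only [hu'def, ha'def, hx, if_true]
    exact hyp x hx
  intro x hx
  have hres := gronwall_fwd_aux hαβ p a' u' hpm hpi hp0 ha'm hu'm ha' hu' hyp' x hx
  simp only [hu'def, ha'def, hx, if_true] at hres
  refine hres.trans (le_of_eq ?_)
  congr 1
  refine intervalIntegral.integral_congr (fun r hr => ?_)
  have : r ∈ Icc α β := hsub hx hr
  simp only [ha'def, this, if_true]


lemma cont_prim_right {w : ℝ → ℝ} (hwi : Integrable w) (c : ℝ) :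
    Continuous (fun x => ∫ y in x..c, w y) :=
  (continuous_const.sub (hwi.continuous_primitive c)).congr (fun x => prim_diff hwi c x c)

lemma integrable_mul_vanish {p f : ℝ → ℝ} (hpm : Measurable p) (hpi : Integrable p)
    (hp0 : ∀ x, 0 ≤ p x) (hfm : AEStronglyMeasurable f volume) {s : Set ℝ} {C : ℝ}
    (hC : ∀ x ∈ s, |f x| ≤ C) (hz : ∀ x, x ∉ s → p x = 0) :
    Integrable (fun x => p x * f x) := by
  refine (hpi.const_mul C).mono' (hpm.aestronglyMeasurable.mul hfm) (ae_of_all _ (fun x => ?_))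
  by_cases hx : x ∈ s
  · rw [Real.norm_eq_abs, abs_mul, abs_of_nonneg (hp0 x)]
    calc p x * |f x| ≤ p x * C := mul_le_mul_of_nonneg_left (hC x hx) (hp0 x)
      _ = C * p x := mul_comm _ _
  · rw [hz x hx]
    simp


lemma gronwall_bwd {α β : ℝ} (hαβ : α ≤ β) (p a u : ℝ → ℝ)
    (hpm : Measurable p) (hpi : Integrable p) (hp0 : ∀ x, 0 ≤ p x)
    (ham : Measurable a) (hum : Measurable u)
    {Ka M : ℝ} (ha : ∀ x ∈ Icc α β, a x ∈ Icc 0 Ka) (hu : ∀ x ∈ Icc α β, u x ∈ Icc 0 M)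
    (hyp : ∀ x ∈ Icc α β, u x ≤ a x + ∫ r in x..β, p r * u r) :
    ∀ x ∈ Icc α β, u x ≤ a x + ∫ r in x..β, a r * p r * Real.exp (∫ y in x..r, p y) := by
  have hKa0 : 0 ≤ Ka := le_trans (ha α ⟨le_refl _, hαβ⟩).1 (ha α ⟨le_refl _, hαβ⟩).2
  have hM0 : 0 ≤ M := le_trans (hu α ⟨le_refl _, hαβ⟩).1 (hu α ⟨le_refl _, hαβ⟩).2
  set a' : ℝ → ℝ := fun x => if x ∈ Icc α β then a x else 0 with ha'def
  set u' : ℝ → ℝ := fun x => if x ∈ Icc α β then u x else 0 with hu'def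
  have ha'm : Measurable a' := Measurable.ite measurableSet_Icc ham measurable_const
  have hu'm : Measurable u' := Measurable.ite measurableSet_Icc hum measurable_const
  have ha' : ∀ x, a' x ∈ Icc 0 Ka := by
    intro x; by_cases hx : x ∈ Icc α β <;> simp only [ha'def, hx, if_true, if_false]
    · exact ha x hx
    · exact ⟨le_refl _, hKa0⟩
  have hu' : ∀ x, u' x ∈ Icc 0 M := by
    intro x; by_cases hx : x ∈ Icc α β <;> simp only [hu'def, hx, if_true, if_false]
    · exact hu x hx
    · exact ⟨le_refl _, hM0⟩
  have hsub : ∀ {x}, x ∈ Icc α β → uIcc x β ⊆ Icc α β := by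
    intro x hx
    rw [uIcc_of_le hx.2]
    exact Icc_subset_Icc hx.1 (le_refl _)
  have hcongr_u : ∀ x ∈ Icc α β, (∫ r in x..β, p r * u' r) = ∫ r in x..β, p r * u r := by
    intro x hx
    refine intervalIntegral.integral_congr (fun r hr => ?_)
    have : r ∈ Icc α β := hsub hx hr
    simp only [hu'def, this, if_true]
  have hyp' : ∀ x ∈ Icc α β, u' x ≤ a' x + ∫ r in x..β, p r * u' r := by
    intro x hx
    rw [hcongr_u x hx]
    simp only [hu'def, ha'def, hx, if_true]
    exact hyp x hx
  intro x hx
  have hres := gronwall_bwd_aux hαβ p a' u' hpm hpi hp0 ha'm hu'm ha' hu' hyp' x hx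
  simp only [hu'def, ha'def, hx, if_true] at hres
  refine hres.trans (le_of_eq ?_)
  congr 1
  refine intervalIntegral.integral_congr (fun r hr => ?_)
  have : r ∈ Icc α β := hsub hx hr
  simp only [ha'def, this, if_true]

end auxiliary

/-- Two-parameter Gronwall inequality. -/
theorem two_parameter_gronwall
    (T : ℝ) (hT : 0 < T) (f g : ℝ → ℝ → ℝ) (h : ℝ → ℝ)
    (hfmeas : Measurable (Function.uncurry f)) (hgmeas : Measurable (Function.uncurry g))
    (hfnonneg : ∀ s t, 0 ≤ s → s ≤ t → t ≤ T → 0 ≤ f s t)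
    (hgnonneg : ∀ s t, 0 ≤ s → s ≤ t → t ≤ T → 0 ≤ g s t)
    (hfbdd : ∃ M, ∀ s t, 0 ≤ s → s ≤ t → t ≤ T → f s t ≤ M)
    (hgbdd : ∃ M, ∀ s t, 0 ≤ s → s ≤ t → t ≤ T → g s t ≤ M)
    (hhnonneg : ∀ r ∈ Set.Icc (0:ℝ) T, 0 ≤ h r)
    (hhmeas : Measurable h) (hhint : IntegrableOn h (Set.Icc 0 T))
    (hyp : ∀ s t, 0 ≤ s → s ≤ t → t ≤ T →
      f s t ≤ g s t + ∫ r in s..t, h r * (f s r + f r T)) :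
    ∀ s t, 0 ≤ s → s ≤ t → t ≤ T →
      f s t ≤ gronG g h s t +
        ∫ r in s..t, gronH h r t *
          (gronG g h r T +
            ∫ r' in r..T, gronG g h r' T * gronH h r' T *
              Real.exp (∫ r'' in r..r', gronH h r'' T)) := by
  obtain ⟨Mf, hMf⟩ := hfbdd
  obtain ⟨Mg, hMg⟩ := hgbdd
  set Mf' : ℝ := max Mf 0 with hMf'def
  set Mg' : ℝ := max Mg 0 with hMg'def
  have hMf'0 : 0 ≤ Mf' := le_max_right _ _
  have hMg'0 : 0 ≤ Mg' := le_max_right _ _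
  set H : ℝ → ℝ := (Set.Icc (0:ℝ) T).indicator h with hHdef
  have hHm : Measurable H := hhmeas.indicator measurableSet_Icc
  have hHi : Integrable H := hhint.integrable_indicator measurableSet_Icc
  have hHeq : ∀ x ∈ Icc (0:ℝ) T, H x = h x := fun x hx => Set.indicator_of_mem hx h
  have hHz : ∀ x, x ∉ Icc (0:ℝ) T → H x = 0 := fun x hx => Set.indicator_of_notMem hx h
  have hH0 : ∀ x, 0 ≤ H x := by
    intro x
    by_cases hx : x ∈ Icc (0:ℝ) T
    · rw [hHeq x hx]; exact hhnonneg x hx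
    · rw [hHz x hx]
  set Bt : ℝ := ∫ y, H y with hBtdef
  have hBt0 : 0 ≤ Bt := integral_nonneg hH0
  have hexpBd : ∀ u v : ℝ, Real.exp (∫ y in u..v, H y) ≤ Real.exp Bt :=
    fun u v => Real.exp_le_exp.2 ((le_abs_self _).trans (prim_abs_le hHi hH0 u v))
  have hmem : ∀ {u v w : ℝ}, u ∈ Icc (0:ℝ) T → v ∈ Icc (0:ℝ) T → w ∈ uIcc u v →
      w ∈ Icc (0:ℝ) T := by
    intro u v w hu hv hw
    have : uIcc u v ⊆ uIcc (0:ℝ) T := by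
      apply uIcc_subset_uIcc <;> rw [uIcc_of_le hT.le]
      · exact hu
      · exact hv
    have h2 := this hw
    rwa [uIcc_of_le hT.le] at h2
  have hfm1 : Measurable (fun r => f r T) := hfmeas.comp (measurable_id.prodMk measurable_const)
  have hfT_bd : ∀ r ∈ Icc (0:ℝ) T, |f r T| ≤ Mf' := by
    intro r hr
    rw [abs_le]
    constructor
    · linarith [hfnonneg r T hr.1 hr.2 le_rfl, hMf'0]
    · exact (hMf r T hr.1 hr.2 le_rfl).trans (le_max_left _ _)
  have hG0i : Integrable (fun v => H v * f v T) :=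
    integrable_mul_vanish hHm hHi hH0 hfm1.aestronglyMeasurable hfT_bd hHz
  -- step B
  have stepB : ∀ s' t', 0 ≤ s' → s' ≤ t' → t' ≤ T →
      f s' t' ≤ gronG g H s' t' + ∫ v in s'..t', gronH H v t' * f v T := by
    intro s' t' hs0 hst' ht'T
    have hs'T : s' ≤ T := hst'.trans ht'T
    have hsIcc : s' ∈ Icc (0:ℝ) T := ⟨hs0, hs'T⟩
    set a1 : ℝ → ℝ := fun x => g s' x + ∫ r in s'..x, H r * f r T with ha1def
    have hgm1 : Measurable (fun x => g s' x) :=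
      hgmeas.comp (measurable_const.prodMk measurable_id)
    have ha1m : Measurable a1 := hgm1.add (hG0i.continuous_primitive s').measurable
    have ha1bd : ∀ x ∈ Icc s' T, a1 x ∈ Icc 0 (Mg' + Mf' * Bt) := by
      intro x hx
      have hg1l : 0 ≤ g s' x := hgnonneg s' x hs0 hx.1 hx.2
      have hg1u : g s' x ≤ Mg' := (hMg s' x hs0 hx.1 hx.2).trans (le_max_left _ _)
      have hil : 0 ≤ ∫ r in s'..x, H r * f r T :=
        intervalIntegral.integral_nonneg hx.1 (fun r hr =>
          mul_nonneg (hH0 r) (hfnonneg r T (hs0.trans hr.1) (hr.2.trans hx.2) le_rfl))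
      have hiu : (∫ r in s'..x, H r * f r T) ≤ Mf' * Bt := by
        have h1 : (∫ r in s'..x, H r * f r T) ≤ ∫ r in s'..x, Mf' * H r := by
          apply intervalIntegral.integral_mono_on hx.1 hG0i.intervalIntegrable
            ((hHi.const_mul _).intervalIntegrable)
          intro r hr
          have hrIcc : r ∈ Icc (0:ℝ) T := ⟨hs0.trans hr.1, hr.2.trans hx.2⟩
          have := abs_le.1 (hfT_bd r hrIcc)
          nlinarith [hH0 r]
        have h2 : (∫ r in s'..x, Mf' * H r) = Mf' * ∫ r in s'..x, H r :=
          intervalIntegral.integral_const_mul _ _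
        have h3 : (∫ r in s'..x, H r) ≤ Bt := (le_abs_self _).trans (prim_abs_le hHi hH0 s' x)
        rw [h2] at h1
        exact h1.trans (mul_le_mul_of_nonneg_left h3 hMf'0)
      constructor
      · simp only [ha1def]; linarith
      · simp only [ha1def]; linarith
    have hu1m : Measurable (fun x => f s' x) :=
      hfmeas.comp (measurable_const.prodMk measurable_id)
    have hu1bd : ∀ x ∈ Icc s' T, f s' x ∈ Icc 0 Mf' := fun x hx =>
      ⟨hfnonneg s' x hs0 hx.1 hx.2, (hMf s' x hs0 hx.1 hx.2).trans (le_max_left _ _)⟩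
    have hyp1 : ∀ x ∈ Icc s' T, f s' x ≤ a1 x + ∫ r in s'..x, H r * f s' r := by
      intro x hx
      have h0 := hyp s' x hs0 hx.1 hx.2
      have hxIcc : x ∈ Icc (0:ℝ) T := ⟨hs0.trans hx.1, hx.2⟩
      have hIfs : IntervalIntegrable (fun r => H r * f s' r) volume s' x := by
        rw [intervalIntegrable_iff_integrableOn_Ioc_of_le hx.1]
        apply integrableOn_mul_bdd hHm hHi hH0 hu1m.aestronglyMeasurable measurableSet_Ioc
          (C := Mf')
        intro r hr
        rw [abs_le]
        constructor
        · linarith [hfnonneg s' r hs0 hr.1.le (hr.2.trans hx.2), hMf'0]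
        · exact (hMf s' r hs0 hr.1.le (hr.2.trans hx.2)).trans (le_max_left _ _)
      have hcg : (∫ r in s'..x, h r * (f s' r + f r T))
          = ∫ r in s'..x, (H r * f s' r + H r * f r T) := by
        apply intervalIntegral.integral_congr
        intro r hr
        show h r * (f s' r + f r T) = H r * f s' r + H r * f r T
        rw [hHeq r (hmem hsIcc hxIcc hr)]
        ring
      rw [hcg, intervalIntegral.integral_add hIfs hG0i.intervalIntegrable] at h0
      simp only [ha1def]
      linarith
    have star := gronwall_fwd hs'T H a1 (fun x => f s' x) hHm hHi hH0 ha1m hu1m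
      ha1bd hu1bd hyp1 t' ⟨hst', ht'T⟩
    have hIexp : ∀ r : ℝ, |Real.exp (∫ y in r..t', H y)| ≤ Real.exp Bt := fun r => by
      rw [abs_of_nonneg (Real.exp_nonneg _)]; exact hexpBd r t'
    have hEm : Measurable (fun r : ℝ => Real.exp (∫ y in r..t', H y)) :=
      ((cont_prim_right hHi t').rexp).measurable
    have hFi : Integrable (fun r => H r * Real.exp (∫ y in r..t', H y)) :=
      integrable_mul_bdd_global hHi ((cont_prim_right hHi t').rexp).aestronglyMeasurable hIexp
    have i1 : IntervalIntegrable (fun r => g s' r * H r * Real.exp (∫ y in r..t', H y))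
        volume s' t' := by
      rw [intervalIntegrable_iff_integrableOn_Ioc_of_le hst']
      have base : IntegrableOn
          (fun r => H r * (g s' r * Real.exp (∫ y in r..t', H y))) (Ioc s' t') := by
        apply integrableOn_mul_bdd hHm hHi hH0 (hgm1.mul hEm).aestronglyMeasurable
          measurableSet_Ioc (C := Mg' * Real.exp Bt)
        intro r hr
        rw [Pi.mul_apply, abs_mul]
        refine mul_le_mul ?_ (hIexp r) (abs_nonneg _) hMg'0
        rw [abs_of_nonneg (hgnonneg s' r hs0 hr.1.le (hr.2.trans ht'T))]
        exact (hMg s' r hs0 hr.1.le (hr.2.trans ht'T)).trans (le_max_left _ _)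
      exact base.congr_fun (fun r hr => by ring) measurableSet_Ioc
    have i2 : IntervalIntegrable
        (fun r => (H r * Real.exp (∫ y in r..t', H y)) * ∫ v in s'..r, H v * f v T)
        volume s' t' := by
      rw [intervalIntegrable_iff_integrableOn_Ioc_of_le hst']
      have base : IntegrableOn
          (fun r => H r * (Real.exp (∫ y in r..t', H y) * ∫ v in s'..r, H v * f v T))
          (Ioc s' t') := by
        apply integrableOn_mul_bdd hHm hHi hH0
          (hEm.mul (hG0i.continuous_primitive s').measurable).aestronglyMeasurable
          measurableSet_Ioc (C := Real.exp Bt * ∫ v, |H v * f v T|)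
        intro r hr
        rw [Pi.mul_apply, abs_mul]
        exact mul_le_mul (hIexp r) (prim_norm_le hG0i s' r) (abs_nonneg _) (Real.exp_nonneg _)
      exact base.congr_fun (fun r hr => by ring) measurableSet_Ioc
    have expand1 : (∫ r in s'..t', a1 r * H r * Real.exp (∫ y in r..t', H y))
        = (∫ r in s'..t', g s' r * H r * Real.exp (∫ y in r..t', H y))
          + ∫ r in s'..t', (H r * Real.exp (∫ y in r..t', H y)) * ∫ v in s'..r, H v * f v T := by
      rw [← intervalIntegral.integral_add i1 i2]
      apply intervalIntegral.integral_congr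
      intro r hr
      simp only [ha1def]
      ring
    have hswap : (∫ r in s'..t', (H r * Real.exp (∫ y in r..t', H y)) * ∫ v in s'..r, H v * f v T)
        = ∫ v in s'..t', (H v * f v T) * ∫ r in v..t', H r * Real.exp (∫ y in r..t', H y) :=
      triangle_swap hst' (fun r => H r * Real.exp (∫ y in r..t', H y)) (fun v => H v * f v T)
        (hHm.mul hEm) (hHm.mul hfm1) hFi.integrableOn hG0i.integrableOn
    have j2 : IntervalIntegrable
        (fun v => (H v * f v T) * ∫ r in v..t', H r * Real.exp (∫ y in r..t', H y))
        volume s' t' := by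
      rw [intervalIntegrable_iff_integrableOn_Ioc_of_le hst']
      have base : IntegrableOn
          (fun v => H v * (f v T * ∫ r in v..t', H r * Real.exp (∫ y in r..t', H y)))
          (Ioc s' t') := by
        apply integrableOn_mul_bdd hHm hHi hH0
          (hfm1.mul (cont_prim_right hFi t').measurable).aestronglyMeasurable
          measurableSet_Ioc (C := Mf' * ∫ r, |H r * Real.exp (∫ y in r..t', H y)|)
        intro v hv
        rw [Pi.mul_apply, abs_mul]
        exact mul_le_mul (hfT_bd v ⟨hs0.trans hv.1.le, hv.2.trans ht'T⟩)
          (prim_norm_le hFi v t') (abs_nonneg _) hMf'0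
      exact base.congr_fun (fun v hv => by ring) measurableSet_Ioc
    have hcombine : (∫ r in s'..t', H r * f r T)
        + (∫ v in s'..t', (H v * f v T) * ∫ r in v..t', H r * Real.exp (∫ y in r..t', H y))
        = ∫ v in s'..t', gronH H v t' * f v T := by
      rw [← intervalIntegral.integral_add hG0i.intervalIntegrable j2]
      apply intervalIntegral.integral_congr
      intro v hv
      show H v * f v T + (H v * f v T) * ∫ r in v..t', H r * Real.exp (∫ y in r..t', H y)
          = gronH H v t' * f v T
      simp only [gronH]
      ring
    have ea1 : a1 t' = g s' t' + ∫ r in s'..t', H r * f r T := rfl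
    have egronG : gronG g H s' t'
        = g s' t' + ∫ r in s'..t', g s' r * H r * Real.exp (∫ y in r..t', H y) := rfl
    calc f s' t' ≤ a1 t' + ∫ r in s'..t', a1 r * H r * Real.exp (∫ y in r..t', H y) := star
      _ = gronG g H s' t' + ∫ v in s'..t', gronH H v t' * f v T := by
          rw [ea1, expand1, hswap, egronG, ← hcombine]; ring
  -- shared objects for the backward step
  have hTIcc : T ∈ Icc (0:ℝ) T := ⟨hT.le, le_rfl⟩
  have hW2i : ∀ τ : ℝ, Integrable (fun r' => H r' * Real.exp (∫ y in r'..τ, H y)) := fun τ =>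
    integrable_mul_bdd_global hHi ((cont_prim_right hHi τ).rexp).aestronglyMeasurable
      (C := Real.exp Bt) (fun r => by
        rw [abs_of_nonneg (Real.exp_nonneg _)]; exact hexpBd r τ)
  have hIvc : ∀ τ : ℝ, Continuous (fun v => ∫ r' in v..τ, H r' * Real.exp (∫ y in r'..τ, H y)) :=
    fun τ => cont_prim_right (hW2i τ) τ
  have hIvbd : ∀ τ v : ℝ, |1 + ∫ r' in v..τ, H r' * Real.exp (∫ y in r'..τ, H y)|
      ≤ 1 + ∫ r', |H r' * Real.exp (∫ y in r'..τ, H y)| := by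
    intro τ v
    refine (abs_add_le _ _).trans ?_
    simp only [abs_one]
    exact add_le_add_right (prim_norm_le (hW2i τ) v τ) 1
  have hgronHm : ∀ τ : ℝ, Measurable (fun v => gronH H v τ) := fun τ =>
    hHm.mul ((continuous_const.add (hIvc τ)).measurable)
  have hgronH0 : ∀ τ v : ℝ, v ≤ τ → 0 ≤ gronH H v τ := by
    intro τ v hv
    apply mul_nonneg (hH0 v)
    have h2 : 0 ≤ ∫ r' in v..τ, H r' * Real.exp (∫ y in r'..τ, H y) :=
      intervalIntegral.integral_nonneg hv (fun u hu => mul_nonneg (hH0 u) (Real.exp_nonneg _))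
    linarith
  have hgronHz : ∀ τ v : ℝ, v ∉ Icc (0:ℝ) T → gronH H v τ = 0 := by
    intro τ v hv
    have : H v = 0 := hHz v hv
    simp only [gronH, this, zero_mul]
  have hgronHT0 : ∀ v, 0 ≤ gronH H v T := by
    intro v
    by_cases hv : v ∈ Icc (0:ℝ) T
    · exact hgronH0 T v hv.2
    · rw [hgronHz T v hv]
  set CW : ℝ := 1 + ∫ r', |H r' * Real.exp (∫ y in r'..T, H y)| with hCWdef
  have hgronHTi : Integrable (fun v => gronH H v T) := by
    have := integrable_mul_bdd_global hHi
      ((continuous_const.add (hIvc T)).aestronglyMeasurable) (C := CW) (fun v => hIvbd T v)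
    exact this
  -- the measurable version of gronG · T
  set A' : ℝ → ℝ := fun v => g v T +
    ∫ r, (Ioc v T).indicator (fun r => g v r * H r * Real.exp (∫ y in r..T, H y)) r with hA'def
  have hgm2 : Measurable (fun v : ℝ => g v T) :=
    hgmeas.comp (measurable_id.prodMk measurable_const)
  have hEm2 : Measurable (fun r : ℝ => Real.exp (∫ y in r..T, H y)) :=
    ((cont_prim_right hHi T).rexp).measurable
  have hA'm : Measurable A' := by
    have hfun : ∀ z : ℝ × ℝ,
        (Ioc z.1 T).indicator (fun r => g z.1 r * H r * Real.exp (∫ y in r..T, H y)) z.2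
        = if z.2 ∈ Ioc z.1 T then g z.1 z.2 * H z.2 * Real.exp (∫ y in z.2..T, H y) else 0 :=
      fun z => Set.indicator_apply _ _ _
    have hset : MeasurableSet {z : ℝ × ℝ | z.2 ∈ Ioc z.1 T} := by
      have : {z : ℝ × ℝ | z.2 ∈ Ioc z.1 T}
          = {z : ℝ × ℝ | z.1 < z.2} ∩ {z : ℝ × ℝ | z.2 ≤ T} := by
        ext z; simp [Set.mem_Ioc, and_comm]
      rw [this]
      exact (measurableSet_lt measurable_fst measurable_snd).inter
        (measurable_snd measurableSet_Iic)
    have hKm : Measurable (fun z : ℝ × ℝ =>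
        (Ioc z.1 T).indicator (fun r => g z.1 r * H r * Real.exp (∫ y in r..T, H y)) z.2) := by
      rw [show (fun z : ℝ × ℝ =>
          (Ioc z.1 T).indicator (fun r => g z.1 r * H r * Real.exp (∫ y in r..T, H y)) z.2)
          = fun z : ℝ × ℝ => if z.2 ∈ Ioc z.1 T
            then g z.1 z.2 * H z.2 * Real.exp (∫ y in z.2..T, H y) else 0 from funext hfun]
      exact Measurable.ite hset
        ((hgmeas.mul (hHm.comp measurable_snd)).mul (hEm2.comp measurable_snd))
        measurable_const
    exact hgm2.add hKm.stronglyMeasurable.integral_prod_right'.measurable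
  have hA'eq : ∀ v ∈ Icc (0:ℝ) T, A' v = gronG g H v T := by
    intro v hv
    simp only [hA'def, gronG]
    congr 1
    rw [integral_indicator measurableSet_Ioc, intervalIntegral.integral_of_le hv.2]
  set KA : ℝ := Mg' + Mg' * Real.exp Bt * Bt with hKAdef
  have hgronGbd : ∀ v ∈ Icc (0:ℝ) T, gronG g H v T ∈ Icc 0 KA := by
    intro v hv
    have hInt : IntervalIntegrable
        (fun r => g v r * H r * Real.exp (∫ y in r..T, H y)) volume v T := by
      rw [intervalIntegrable_iff_integrableOn_Ioc_of_le hv.2]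
      have hgm3 : Measurable (fun r : ℝ => g v r) :=
        hgmeas.comp (measurable_const.prodMk measurable_id)
      have base : IntegrableOn
          (fun r => H r * (g v r * Real.exp (∫ y in r..T, H y))) (Ioc v T) := by
        apply integrableOn_mul_bdd hHm hHi hH0
          (hgm3.mul hEm2).aestronglyMeasurable
          measurableSet_Ioc (C := Mg' * Real.exp Bt)
        intro r hr
        rw [Pi.mul_apply, abs_mul, abs_of_nonneg (hgnonneg v r hv.1 hr.1.le hr.2),
          abs_of_nonneg (Real.exp_nonneg _)]
        exact mul_le_mul ((hMg v r hv.1 hr.1.le hr.2).trans (le_max_left _ _)) (hexpBd r T)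
          (Real.exp_nonneg _) hMg'0
      exact base.congr_fun (fun r hr => by ring) measurableSet_Ioc
    constructor
    · refine add_nonneg (hgnonneg v T hv.1 hv.2 le_rfl) ?_
      exact intervalIntegral.integral_nonneg hv.2 (fun r hr =>
        mul_nonneg (mul_nonneg (hgnonneg v r hv.1 hr.1 (hr.2)) (hH0 r)) (Real.exp_nonneg _))
    · have h1 : (∫ r in v..T, g v r * H r * Real.exp (∫ y in r..T, H y))
          ≤ ∫ r in v..T, (Mg' * Real.exp Bt) * H r := by
        apply intervalIntegral.integral_mono_on hv.2 hInt
          ((hHi.const_mul _).intervalIntegrable)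
        intro r hr
        have hg := hgnonneg v r hv.1 hr.1 hr.2
        have hgu := (hMg v r hv.1 hr.1 hr.2).trans (le_max_left Mg (0:ℝ))
        have he := hexpBd r T
        have he0 := Real.exp_nonneg (∫ y in r..T, H y)
        have hH := hH0 r
        have hge : g v r * Real.exp (∫ y in r..T, H y) ≤ Mg' * Real.exp Bt :=
          mul_le_mul hgu he he0 hMg'0
        calc g v r * H r * Real.exp (∫ y in r..T, H y)
            = g v r * Real.exp (∫ y in r..T, H y) * H r := by ring
          _ ≤ Mg' * Real.exp Bt * H r := mul_le_mul_of_nonneg_right hge hH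
      have h2 : (∫ r in v..T, (Mg' * Real.exp Bt) * H r)
          = (Mg' * Real.exp Bt) * ∫ r in v..T, H r := intervalIntegral.integral_const_mul _ _
      have h3 : (∫ r in v..T, H r) ≤ Bt := (le_abs_self _).trans (prim_abs_le hHi hH0 v T)
      have h4 : g v T ≤ Mg' := (hMg v T hv.1 hv.2 le_rfl).trans (le_max_left _ _)
      have h5 : 0 ≤ Mg' * Real.exp Bt := mul_nonneg hMg'0 (Real.exp_nonneg _)
      simp only [gronG, hKAdef]
      rw [h2] at h1
      nlinarith [mul_le_mul_of_nonneg_left h3 h5]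
  have hA'bd : ∀ v ∈ Icc (0:ℝ) T, A' v ∈ Icc 0 KA := fun v hv =>
    (hA'eq v hv) ▸ hgronGbd v hv
  have hKA0 : 0 ≤ KA := by positivity
  -- auxiliary congruence lemmas between `H` and `h`
  have hcgH : ∀ u v : ℝ, u ∈ Icc (0:ℝ) T → v ∈ Icc (0:ℝ) T → gronH H u v = gronH h u v := by
    intro u v hu hv
    simp only [gronH]
    rw [hHeq u hu]
    have h1 : (∫ r' in u..v, H r' * Real.exp (∫ y in r'..v, H y))
        = ∫ r' in u..v, h r' * Real.exp (∫ y in r'..v, h y) := by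
      apply intervalIntegral.integral_congr
      intro r' hr'
      have hr0 : r' ∈ Icc (0:ℝ) T := hmem hu hv hr'
      show H r' * Real.exp (∫ y in r'..v, H y) = h r' * Real.exp (∫ y in r'..v, h y)
      rw [hHeq r' hr0]
      have h2 : (∫ y in r'..v, H y) = ∫ y in r'..v, h y :=
        intervalIntegral.integral_congr (fun w hw => hHeq w (hmem hr0 hv hw))
      rw [h2]
    rw [h1]
  have hcgG : ∀ u v : ℝ, u ∈ Icc (0:ℝ) T → v ∈ Icc (0:ℝ) T → gronG g H u v = gronG g h u v := by
    intro u v hu hv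
    simp only [gronG]
    have h1 : (∫ r in u..v, g u r * H r * Real.exp (∫ y in r..v, H y))
        = ∫ r in u..v, g u r * h r * Real.exp (∫ y in r..v, h y) := by
      apply intervalIntegral.integral_congr
      intro r hr
      have hr0 : r ∈ Icc (0:ℝ) T := hmem hu hv hr
      show g u r * H r * Real.exp (∫ y in r..v, H y)
          = g u r * h r * Real.exp (∫ y in r..v, h y)
      rw [hHeq r hr0]
      have h2 : (∫ y in r..v, H y) = ∫ y in r..v, h y :=
        intervalIntegral.integral_congr (fun w hw => hHeq w (hmem hr0 hv hw))
      rw [h2]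
    rw [h1]
  -- main part
  intro s t hs hst htT
  have hsT : s ≤ T := hst.trans htT
  have hsIcc0 : s ∈ Icc (0:ℝ) T := ⟨hs, hsT⟩
  have htIcc0 : t ∈ Icc (0:ℝ) T := ⟨hs.trans hst, htT⟩
  have hyp2 : ∀ v ∈ Icc s T, f v T ≤ A' v + ∫ r in v..T, gronH H r T * f r T := by
    intro v hv
    have hv0 : v ∈ Icc (0:ℝ) T := ⟨hs.trans hv.1, hv.2⟩
    have h0 := stepB v T hv0.1 hv.2 le_rfl
    rwa [← hA'eq v hv0] at h0
  have hu2bd : ∀ v ∈ Icc s T, f v T ∈ Icc 0 Mf' := fun v hv =>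
    ⟨hfnonneg v T (hs.trans hv.1) hv.2 le_rfl,
      (hMf v T (hs.trans hv.1) hv.2 le_rfl).trans (le_max_left _ _)⟩
  have starC : ∀ v ∈ Icc s T, f v T ≤ A' v +
      ∫ r in v..T, A' r * gronH H r T * Real.exp (∫ y in v..r, gronH H y T) :=
    gronwall_bwd hsT (fun v => gronH H v T) A' (fun v => f v T)
      (hgronHm T) hgronHTi hgronHT0 hA'm hfm1
      (fun v hv => hA'bd v ⟨hs.trans hv.1, hv.2⟩) hu2bd hyp2
  -- rewrite the nested exponential into a product form
  set CB2 : ℝ := ∫ y, gronH H y T with hCB2def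
  have hPBc : Continuous (fun x : ℝ => ∫ y in (0:ℝ)..x, gronH H y T) :=
    hgronHTi.continuous_primitive 0
  have hPBb : ∀ x, |∫ y in (0:ℝ)..x, gronH H y T| ≤ CB2 :=
    fun x => prim_abs_le hgronHTi hgronHT0 0 x
  have hK2i : Integrable
      (fun r => A' r * gronH H r T * Real.exp (∫ y in (0:ℝ)..r, gronH H y T)) := by
    have base := integrable_mul_vanish (p := fun v => gronH H v T)
      (f := fun r => A' r * Real.exp (∫ y in (0:ℝ)..r, gronH H y T))
      (hgronHm T) hgronHTi hgronHT0
      ((hA'm.mul hPBc.rexp.measurable).aestronglyMeasurable)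
      (s := Icc (0:ℝ) T) (C := KA * Real.exp CB2)
      (fun r hr => by
        rw [abs_mul, abs_of_nonneg (hA'bd r hr).1, abs_of_nonneg (Real.exp_nonneg _)]
        exact mul_le_mul (hA'bd r hr).2
          (Real.exp_le_exp.2 ((le_abs_self _).trans (hPBb r))) (Real.exp_nonneg _) hKA0)
      (hgronHz T)
    exact base.congr (ae_of_all _ (fun r => by ring))
  have hJ : ∀ v : ℝ, (∫ r in v..T, A' r * gronH H r T * Real.exp (∫ y in v..r, gronH H y T))
      = Real.exp (-(∫ y in (0:ℝ)..v, gronH H y T)) *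
        ∫ r in v..T, A' r * gronH H r T * Real.exp (∫ y in (0:ℝ)..r, gronH H y T) := by
    intro v
    rw [← intervalIntegral.integral_const_mul]
    apply intervalIntegral.integral_congr
    intro r hr
    show A' r * gronH H r T * Real.exp (∫ y in v..r, gronH H y T)
        = Real.exp (-(∫ y in (0:ℝ)..v, gronH H y T)) *
          (A' r * gronH H r T * Real.exp (∫ y in (0:ℝ)..r, gronH H y T))
    have hd : (∫ y in v..r, gronH H y T)
        = (∫ y in (0:ℝ)..r, gronH H y T) - ∫ y in (0:ℝ)..v, gronH H y T :=
      (prim_diff hgronHTi 0 v r).symm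
    rw [hd]
    simp only [Real.exp_sub, Real.exp_neg]
    ring
  set W : ℝ → ℝ := fun v => A' v + Real.exp (-(∫ y in (0:ℝ)..v, gronH H y T)) *
    ∫ r in v..T, A' r * gronH H r T * Real.exp (∫ y in (0:ℝ)..r, gronH H y T) with hWdef
  have hWm : Measurable W :=
    hA'm.add ((hPBc.neg.rexp.measurable).mul (cont_prim_right hK2i T).measurable)
  set CWf : ℝ := KA + Real.exp CB2 *
    ∫ r, |A' r * gronH H r T * Real.exp (∫ y in (0:ℝ)..r, gronH H y T)| with hCWfdef
  have hWbd : ∀ v ∈ Icc (0:ℝ) T, |W v| ≤ CWf := by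
    intro v hv
    refine (abs_add_le _ _).trans (add_le_add ?_ ?_)
    · rw [abs_of_nonneg (hA'bd v hv).1]; exact (hA'bd v hv).2
    · rw [abs_mul, abs_of_nonneg (Real.exp_nonneg _)]
      exact mul_le_mul (Real.exp_le_exp.2 ((neg_le_abs _).trans (hPBb v)))
        (prim_norm_le hK2i v T) (abs_nonneg _) (Real.exp_nonneg _)
  have hfW : ∀ v ∈ Icc s t, f v T ≤ W v := by
    intro v hv
    have h2 : W v = A' v + ∫ r in v..T, A' r * gronH H r T *
        Real.exp (∫ y in v..r, gronH H y T) := by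
      simp only [hWdef]; rw [hJ v]
    rw [h2]
    exact starC v ⟨hv.1, hv.2.trans htT⟩
  have hLi : IntervalIntegrable (fun v => gronH H v t * f v T) volume s t := by
    rw [intervalIntegrable_iff_integrableOn_Ioc_of_le hst]
    have base : IntegrableOn (fun v => H v *
        ((1 + ∫ r' in v..t, H r' * Real.exp (∫ y in r'..t, H y)) * f v T)) (Ioc s t) := by
      apply integrableOn_mul_bdd hHm hHi hH0
        (((continuous_const.add (hIvc t)).measurable).mul hfm1).aestronglyMeasurable
        measurableSet_Ioc
        (C := (1 + ∫ r', |H r' * Real.exp (∫ y in r'..t, H y)|) * Mf')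
      intro v hv
      rw [Pi.mul_apply, abs_mul]
      exact mul_le_mul (hIvbd t v) (hfT_bd v ⟨hs.trans hv.1.le, hv.2.trans htT⟩) (abs_nonneg _)
        (le_trans (abs_nonneg _) (hIvbd t v))
    exact base.congr_fun (fun v hv => by simp only [gronH]; ring) measurableSet_Ioc
  have hRi : IntervalIntegrable (fun v => gronH H v t * W v) volume s t := by
    rw [intervalIntegrable_iff_integrableOn_Ioc_of_le hst]
    have base : IntegrableOn (fun v => H v *
        ((1 + ∫ r' in v..t, H r' * Real.exp (∫ y in r'..t, H y)) * W v)) (Ioc s t) := by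
      apply integrableOn_mul_bdd hHm hHi hH0
        (((continuous_const.add (hIvc t)).measurable).mul hWm).aestronglyMeasurable
        measurableSet_Ioc
        (C := (1 + ∫ r', |H r' * Real.exp (∫ y in r'..t, H y)|) * CWf)
      intro v hv
      rw [Pi.mul_apply, abs_mul]
      exact mul_le_mul (hIvbd t v)
        (hWbd v ⟨hs.trans hv.1.le, hv.2.trans htT⟩) (abs_nonneg _)
        (le_trans (abs_nonneg _) (hIvbd t v))
    exact base.congr_fun (fun v hv => by simp only [gronH]; ring) measurableSet_Ioc
  have hmono3 : (∫ v in s..t, gronH H v t * f v T) ≤ ∫ v in s..t, gronH H v t * W v := by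
    apply intervalIntegral.integral_mono_on hst hLi hRi
    intro v hv
    exact mul_le_mul_of_nonneg_left (hfW v hv) (hgronH0 t v hv.2)
  have hWconv : (∫ v in s..t, gronH H v t * W v)
      = ∫ v in s..t, gronH H v t * (gronG g H v T +
          ∫ r' in v..T, gronG g H r' T * gronH H r' T *
            Real.exp (∫ y in v..r', gronH H y T)) := by
    apply intervalIntegral.integral_congr
    intro v hv
    have hv0 : v ∈ Icc (0:ℝ) T := hmem hsIcc0 htIcc0 hv
    have h3 : W v = A' v + ∫ r' in v..T, A' r' * gronH H r' T *
        Real.exp (∫ y in v..r', gronH H y T) := by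
      simp only [hWdef]; rw [hJ v]
    have h4 : (∫ r' in v..T, A' r' * gronH H r' T * Real.exp (∫ y in v..r', gronH H y T))
        = ∫ r' in v..T, gronG g H r' T * gronH H r' T *
            Real.exp (∫ y in v..r', gronH H y T) := by
      apply intervalIntegral.integral_congr
      intro r' hr'
      have hr0 : r' ∈ Icc (0:ℝ) T := hmem hv0 hTIcc hr'
      show A' r' * gronH H r' T * Real.exp (∫ y in v..r', gronH H y T)
          = gronG g H r' T * gronH H r' T * Real.exp (∫ y in v..r', gronH H y T)
      rw [hA'eq r' hr0]
    show gronH H v t * W v = gronH H v t * (gronG g H v T +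
        ∫ r' in v..T, gronG g H r' T * gronH H r' T * Real.exp (∫ y in v..r', gronH H y T))
    rw [h3, hA'eq v hv0, h4]
  have hfinalconv : (∫ v in s..t, gronH H v t * (gronG g H v T +
        ∫ r' in v..T, gronG g H r' T * gronH H r' T *
          Real.exp (∫ y in v..r', gronH H y T)))
      = ∫ v in s..t, gronH h v t * (gronG g h v T +
          ∫ r' in v..T, gronG g h r' T * gronH h r' T *
            Real.exp (∫ r'' in v..r', gronH h r'' T)) := by
    apply intervalIntegral.integral_congr
    intro v hv
    have hv0 : v ∈ Icc (0:ℝ) T := hmem hsIcc0 htIcc0 hv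
    have e3 : (∫ r' in v..T, gronG g H r' T * gronH H r' T *
        Real.exp (∫ y in v..r', gronH H y T))
        = ∫ r' in v..T, gronG g h r' T * gronH h r' T *
            Real.exp (∫ r'' in v..r', gronH h r'' T) := by
      apply intervalIntegral.integral_congr
      intro r' hr'
      have hr0 : r' ∈ Icc (0:ℝ) T := hmem hv0 hTIcc hr'
      have e4 : (∫ y in v..r', gronH H y T) = ∫ y in v..r', gronH h y T :=
        intervalIntegral.integral_congr (fun w hw => hcgH w T (hmem hv0 hr0 hw) hTIcc)
      show gronG g H r' T * gronH H r' T * Real.exp (∫ y in v..r', gronH H y T)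
          = gronG g h r' T * gronH h r' T * Real.exp (∫ r'' in v..r', gronH h r'' T)
      rw [hcgG r' T hr0 hTIcc, hcgH r' T hr0 hTIcc, e4]
    show gronH H v t * (gronG g H v T + ∫ r' in v..T, gronG g H r' T * gronH H r' T *
        Real.exp (∫ y in v..r', gronH H y T))
        = gronH h v t * (gronG g h v T + ∫ r' in v..T, gronG g h r' T * gronH h r' T *
            Real.exp (∫ r'' in v..r', gronH h r'' T))
    rw [hcgH v t hv0 htIcc0, hcgG v T hv0 hTIcc, e3]
  have hmain := stepB s t hs hst htT
  calc f s t ≤ gronG g H s t + ∫ v in s..t, gronH H v t * f v T := hmain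
    _ ≤ gronG g H s t + ∫ v in s..t, gronH H v t * W v := by linarith [hmono3]
    _ = gronG g h s t + ∫ v in s..t, gronH h v t * (gronG g h v T +
          ∫ r' in v..T, gronG g h r' T * gronH h r' T *
            Real.exp (∫ r'' in v..r', gronH h r'' T)) := by
        rw [hWconv, hfinalconv, hcgG s t hsIcc0 htIcc0]

end
end
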